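/- arXiv:1806.02783 — 13 statements merged into one kernel-verified Lean document; each statement's English description precedes it below -/
import Mathlib

section
/- For the cycle graph C_n (n ≥ 3) with the strict majority threshold τ(v) = ⌈(deg(v)+1)/2⌉ = 2 for every vertex, the minimum size of a weak dynamic monopoly equals ⌈n/2⌉. -/
open SimpleGraph Finset
open scoped Classical

/-- Layers witnessing a weak dynamic monopoly: every vertex in layer `i ≥ 1`
has at least `τ v` neighbors in layer `i - 1`. -/
def IsWDMLayers {V : Type*} (G : SimpleGraph V) [Fintype V] (τ : V → ℕ) (L : V → ℕ) : Prop :=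
  ∀ v : V, 1 ≤ L v →
    τ v ≤ ((G.neighborFinset v).filter (fun u => L u + 1 = L v)).card

/-- `D` is a weak dynamic monopoly of `(G, τ)`. -/
def IsWDM {V : Type*} (G : SimpleGraph V) [Fintype V] (τ : V → ℕ) (D : Finset V) : Prop :=
  ∃ L : V → ℕ, IsWDMLayers G τ L ∧ ∀ v, v ∈ D ↔ L v = 0

/-- The smallest size of a weak dynamic monopoly. -/
noncomputable def wdyn {V : Type*} (G : SimpleGraph V) [Fintype V] (τ : V → ℕ) : ℕ :=
  sInf {n | ∃ D : Finset V, IsWDM G τ D ∧ D.card = n}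

private lemma aux_val_add_one (m : ℕ) (v : Fin (m+3)) :
    (v + 1).val = if v.val = m + 2 then 0 else v.val + 1 := by
  rw [Fin.add_def]
  simp only [Fin.val_one]
  split_ifs with h
  · simp [h, Nat.add_mod_left]
  · exact Nat.mod_eq_of_lt (by omega)

private lemma aux_val_sub_one (m : ℕ) (v : Fin (m+3)) :
    (v - 1).val = if v.val = 0 then m + 2 else v.val - 1 := by
  rw [Fin.sub_def]
  simp only [Fin.val_one]
  split_ifs with h
  · simp [h, Nat.mod_eq_of_lt (show m+3-1+0 < m+3 by omega)]
  · have : m + 3 - 1 + v.val = (v.val - 1) + (m + 3) := by omega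
    simp only [this, Nat.add_mod_right]
    exact Nat.mod_eq_of_lt (by omega)

private lemma aux_adj_sub_one (m : ℕ) (v : Fin (m+3)) :
    (SimpleGraph.cycleGraph (m+3)).Adj v (v - 1) := by
  rw [cycleGraph_adj (n := m + 1)]
  left; exact sub_sub_cancel v 1

private lemma aux_adj_add_one (m : ℕ) (v : Fin (m+3)) :
    (SimpleGraph.cycleGraph (m+3)).Adj v (v + 1) := by
  rw [cycleGraph_adj (n := m + 1)]
  right; exact add_sub_cancel_left v 1

private lemma aux_range_even_card (n : ℕ) :
    ((range n).filter (fun x => x % 2 = 0)).card = (n+1)/2 := by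
  induction n with
  | zero => simp
  | succ k ih =>
    rw [Finset.range_add_one, Finset.filter_insert]
    split_ifs with h
    · rw [Finset.card_insert_of_notMem (by simp)]; omega
    · omega

private lemma aux_fin_filter_card (n : ℕ) (p : ℕ → Prop) [DecidablePred p] :
    ((univ : Finset (Fin n)).filter (fun v => p v.val)).card
      = ((range n).filter (fun x => p x)).card := by
  apply Finset.card_bij (fun v _ => v.val)
  · intro a ha; simp at ha ⊢; exact ha
  · intro a _ b _ h; exact Fin.val_injective h
  · intro b hb; simp at hb; exact ⟨⟨b, hb.1⟩, by simp [hb.2]⟩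

/-- For the cycle `C_n` (n ≥ 3) with the strict majority threshold 2 on every
vertex, the minimum size of a weak dynamic monopoly is ⌈n/2⌉. -/
theorem wdyn_cycleGraph (n : ℕ) (hn : 3 ≤ n) :
    wdyn (SimpleGraph.cycleGraph n) (fun _ => 2) = (n + 1) / 2 := by
  obtain ⟨m, rfl⟩ : ∃ m, n = m + 3 := ⟨n - 3, by omega⟩
  have hmem : (m + 3 + 1) / 2 ∈
      {k | ∃ D : Finset (Fin (m+3)),
        IsWDM (SimpleGraph.cycleGraph (m+3)) (fun _ => 2) D ∧ D.card = k} := by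
    refine ⟨(univ : Finset (Fin (m+3))).filter (fun v => v.val % 2 = 0),
      ⟨fun v => v.val % 2, ?_, fun v => by simp⟩, ?_⟩
    · intro v hv
      replace hv : 1 ≤ v.val % 2 := hv
      have hvodd : v.val % 2 = 1 := by omega
      have hsub1 := aux_val_sub_one m v
      have hadd1 := aux_val_add_one m v
      have hlt := v.isLt
      have hne : v - 1 ≠ v + 1 := by
        intro h
        have := congrArg Fin.val h
        split_ifs at hsub1 hadd1 <;> omega
      show 2 ≤ _
      refine le_trans (le_of_eq (Finset.card_pair hne).symm) (Finset.card_le_card ?_)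
      intro u hu
      rw [Finset.mem_filter, SimpleGraph.mem_neighborFinset]
      rcases Finset.mem_insert.mp hu with h | h
      · subst h
        refine ⟨aux_adj_sub_one m v, ?_⟩
        show (v - 1).val % 2 + 1 = v.val % 2
        split_ifs at hsub1 <;> omega
      · rw [Finset.mem_singleton.mp h]
        refine ⟨aux_adj_add_one m v, ?_⟩
        show (v + 1).val % 2 + 1 = v.val % 2
        split_ifs at hadd1 <;> omega
    · exact (aux_fin_filter_card (m+3) (fun x => x % 2 = 0)).trans
        (aux_range_even_card (m+3))
  have hlb : ∀ k ∈ {k | ∃ D : Finset (Fin (m+3)),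
      IsWDM (SimpleGraph.cycleGraph (m+3)) (fun _ => 2) D ∧ D.card = k},
      (m + 3 + 1) / 2 ≤ k := by
    rintro k ⟨D, ⟨L, hL, hD⟩, rfl⟩
    have key : ∀ (v : Fin (m+3)) (inst : Fintype ((SimpleGraph.cycleGraph (m+3)).neighborSet v)),
        2 ≤ ((@SimpleGraph.neighborFinset _ _ v inst).filter (fun u => L u + 1 = L v)).card →
        ∀ u : Fin (m+3), (SimpleGraph.cycleGraph (m+3)).Adj v u → L u + 1 = L v := by
      intro v inst h2 u hadj
      have hNsub : (@SimpleGraph.neighborFinset _ _ v inst) ⊆ {v - 1, v + 1} := by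
        intro w hw
        rw [SimpleGraph.mem_neighborFinset, cycleGraph_adj (n := m + 1)] at hw
        rcases hw with h | h
        · exact Finset.mem_insert.mpr (Or.inl ((sub_sub_cancel v w).symm.trans (congrArg (v - ·) h)))
        · exact Finset.mem_insert.mpr (Or.inr (Finset.mem_singleton.mpr
            ((add_sub_cancel v w).symm.trans (congrArg (v + ·) h))))
      have hNcard : (@SimpleGraph.neighborFinset _ _ v inst).card ≤ 2 :=
        le_trans (Finset.card_le_card hNsub) (le_trans (Finset.card_insert_le _ _) (by simp))
      have heq := Finset.eq_of_subset_of_card_le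
        (Finset.filter_subset (fun u => L u + 1 = L v) (@SimpleGraph.neighborFinset _ _ v inst))
        (hNcard.trans h2)
      have hu : u ∈ (@SimpleGraph.neighborFinset _ _ v inst) := by
        rw [SimpleGraph.mem_neighborFinset]; exact hadj
      rw [← heq] at hu
      exact (Finset.mem_filter.mp hu).2
    have hind : ∀ u v : Fin (m+3), (SimpleGraph.cycleGraph (m+3)).Adj u v →
        L u ≠ 0 → L v ≠ 0 → False := by
      intro u v hadj hu hv
      have h1 := key v _ (hL v (by omega)) u hadj.symm
      have h2 := key u _ (hL u (by omega)) v hadj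
      omega
    have hcard : ((univ : Finset (Fin (m+3))).filter (fun v => ¬ L v = 0)).card ≤ D.card := by
      apply Finset.card_le_card_of_injOn (fun v => v + 1)
      · intro v hv
        simp only [Finset.coe_filter, Finset.mem_coe, Finset.mem_filter, Finset.mem_univ, true_and, Set.mem_setOf_eq] at hv ⊢
        rw [hD]
        by_contra h
        exact hind v (v + 1) (aux_adj_add_one m v) hv h
      · intro a _ b _ h; exact add_right_cancel h
    have hDeq : D = (univ : Finset (Fin (m+3))).filter (fun v => L v = 0) := by
      ext v; simp [hD v]
    have hsplit := Finset.card_filter_add_card_filter_not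
      (s := (univ : Finset (Fin (m+3)))) (p := fun v => L v = 0)
    rw [Finset.card_univ, Fintype.card_fin] at hsplit
    rw [hDeq] at hcard ⊢
    omega
  exact le_antisymm (Nat.sInf_le hmem) (le_csInf ⟨_, hmem⟩ hlb)
end

section
/- Let G_n = K₁ ∨ C_n (the wheel: a vertex u joined to all vertices of a cycle C_n) with thresholds τ(v) = ⌈deg(v)/2⌉ for all v. Then the minimum size of a dynamic monopoly of G_n is 2, while every weak dynamic monopoly of G_n has size at least n/4; in particular wdyn(G_n) = Ω(n) while dyn(G_n) = O(1). -/
open SimpleGraph Finset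
open scoped Classical

/-- Layers witnessing a dynamic monopoly. -/
def IsDynLayers {V : Type*} (G : SimpleGraph V) [Fintype V] (τ : V → ℕ) (L : V → ℕ) : Prop :=
  ∀ v : V, 1 ≤ L v →
    τ v ≤ ((G.neighborFinset v).filter (fun u => L u < L v)).card

/-- `D` is a dynamic monopoly of `(G, τ)`. -/
def IsDyn {V : Type*} (G : SimpleGraph V) [Fintype V] (τ : V → ℕ) (D : Finset V) : Prop :=
  ∃ L : V → ℕ, IsDynLayers G τ L ∧ ∀ v, v ∈ D ↔ L v = 0

noncomputable def dyn {V : Type*} (G : SimpleGraph V) [Fintype V] (τ : V → ℕ) : ℕ :=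
  sInf {n | ∃ D : Finset V, IsDyn G τ D ∧ D.card = n}

/-- The wheel `K₁ ∨ C_n`: a hub `none` joined to every vertex of the cycle `C_n`. -/
def wheel (n : ℕ) : SimpleGraph (Option (Fin n)) where
  Adj x y := x ≠ y ∧ (x = none ∨ y = none ∨
    ∃ i j, x = some i ∧ y = some j ∧ (SimpleGraph.cycleGraph n).Adj i j)
  symm := by
    constructor
    rintro x y ⟨hne, h⟩
    refine ⟨hne.symm, ?_⟩
    rcases h with h | h | ⟨i, j, hi, hj, hadj⟩
    · exact Or.inr (Or.inl h)
    · exact Or.inl h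
    · exact Or.inr (Or.inr ⟨j, i, hj, hi, hadj.symm⟩)
  loopless := by constructor; rintro x ⟨hne, -⟩; exact hne rfl

/-- The thresholds ⌈deg(v)/2⌉ on the wheel: the hub has degree n, each
cycle vertex degree 3. -/
def wheelThreshold (n : ℕ) : Option (Fin n) → ℕ
  | none => (n + 1) / 2
  | some _ => 2

lemma wheel_adj_some {n : ℕ} [NeZero n] (hn : 3 ≤ n) {i : Fin n} {u : Option (Fin n)}
    (h : (wheel n).Adj (some i) u) : u = none ∨ u = some (i - 1) ∨ u = some (i + 1) := by
  obtain ⟨hne, h | h | ⟨a, b, ha, hb, hadj⟩⟩ := h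
  · exact absurd h (by simp)
  · exact Or.inl h
  · obtain rfl : i = a := by injection ha
    rw [cycleGraph_adj'] at hadj
    have h1 : ((1 : Fin n)).val = 1 := Fin.val_one' n |>.trans (Nat.mod_eq_of_lt (by omega))
    rcases hadj with hx | hx
    · right; left; rw [hb]
      congr 1
      have h' : i - b = 1 := Fin.ext (by rw [h1]; exact hx)
      open Fin.CommRing in linear_combination -h'
    · right; right; rw [hb]
      congr 1
      have h' : b - i = 1 := Fin.ext (by rw [h1]; exact hx)
      open Fin.CommRing in linear_combination h'

lemma wheel_adj_none {n : ℕ} {u : Option (Fin n)} (h : (wheel n).Adj none u) :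
    ∃ j, u = some j := by
  obtain ⟨hne, -⟩ := h
  cases u with
  | none => exact absurd rfl hne.symm
  | some j => exact ⟨j, rfl⟩

lemma wheel_adj_some_none {n : ℕ} (i : Fin n) : (wheel n).Adj (some i) none :=
  ⟨by simp, Or.inr (Or.inl rfl)⟩

lemma wheel_adj_some_sub_one {n : ℕ} [NeZero n] (hn : 3 ≤ n) (i : Fin n) :
    (wheel n).Adj (some i) (some (i - 1)) := by
  have h1 : ((1 : Fin n)).val = 1 := Fin.val_one' n |>.trans (Nat.mod_eq_of_lt (by omega))
  refine ⟨?_, Or.inr (Or.inr ⟨i, i - 1, rfl, rfl, ?_⟩)⟩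
  · simp only [ne_eq, Option.some.injEq]
    intro h
    have h0 : (1 : Fin n) = 0 := by open Fin.CommRing in linear_combination h
    rw [h0] at h1; simp at h1
  · rw [cycleGraph_adj']
    left
    have h' : i - (i - 1) = 1 := by open Fin.CommRing in ring
    rw [h', h1]

lemma three_nbrs {n : ℕ} [NeZero n] (hn : 3 ≤ n) {i : Fin n} {P : Option (Fin n) → Prop} [DecidablePred P]
    (h2 : 2 ≤ (((wheel n).neighborFinset (some i)).filter (fun u => P u)).card) :
    (P (some (i - 1)) ∧ P (some (i + 1))) ∨ (P none ∧ P (some (i - 1))) ∨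
      (P none ∧ P (some (i + 1))) := by
  obtain ⟨a, ha, b, hb, hab⟩ :=
    Finset.one_lt_card.mp (lt_of_lt_of_le one_lt_two h2)
  simp only [Finset.mem_filter, SimpleGraph.mem_neighborFinset] at ha hb
  obtain ⟨haa, hPa⟩ := ha
  obtain ⟨hba, hPb⟩ := hb
  rcases wheel_adj_some hn haa with rfl | rfl | rfl <;>
    rcases wheel_adj_some hn hba with rfl | rfl | rfl <;>
    first | exact absurd rfl hab | tauto

lemma hub_two {n : ℕ} {P : Option (Fin n) → Prop} [DecidablePred P]
    (h2 : 2 ≤ (((wheel n).neighborFinset none).filter (fun u => P u)).card) :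
    ∃ j k : Fin n, j ≠ k ∧ P (some j) ∧ P (some k) := by
  obtain ⟨a, ha, b, hb, hab⟩ :=
    Finset.one_lt_card.mp (lt_of_lt_of_le one_lt_two h2)
  simp only [Finset.mem_filter, SimpleGraph.mem_neighborFinset] at ha hb
  obtain ⟨j, rfl⟩ := wheel_adj_none ha.1
  obtain ⟨k, rfl⟩ := wheel_adj_none hb.1
  exact ⟨j, k, by simpa using hab, ha.2, hb.2⟩

lemma card_four_window {n : ℕ} [NeZero n] (Z : Finset (Fin n))
    (h : ∀ i : Fin n, i ∈ Z ∨ i + 1 ∈ Z ∨ i + 1 + 1 ∈ Z ∨ i + 1 + 1 + 1 ∈ Z) :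
    n ≤ 4 * Z.card := by
  have hsub : (univ : Finset (Fin n)) ⊆
      Z.biUnion (fun j => {j, j - 1, j - 1 - 1, j - 1 - 1 - 1}) := by
    intro i _
    rw [Finset.mem_biUnion]
    rcases h i with hz | hz | hz | hz
    · exact ⟨i, hz, by simp⟩
    · exact ⟨i + 1, hz,
        by simp only [Finset.mem_insert, Finset.mem_singleton]; right; left; open Fin.CommRing in ring⟩
    · exact ⟨i + 1 + 1, hz,
        by simp only [Finset.mem_insert, Finset.mem_singleton]; right; right; left; open Fin.CommRing in ring⟩
    · exact ⟨i + 1 + 1 + 1, hz,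
        by simp only [Finset.mem_insert, Finset.mem_singleton]; right; right; right; open Fin.CommRing in ring⟩
  have h1 : n = (univ : Finset (Fin n)).card := by simp
  have h2 := Finset.card_le_card hsub
  have h3 := Finset.card_biUnion_le (s := Z)
    (t := fun j => ({j, j - 1, j - 1 - 1, j - 1 - 1 - 1} : Finset (Fin n)))
  have h4 : ∀ j : Fin n, ({j, j - 1, j - 1 - 1, j - 1 - 1 - 1} : Finset (Fin n)).card ≤ 4 := by
    intro j
    refine (Finset.card_insert_le _ _).trans (Nat.succ_le_succ ?_)
    refine (Finset.card_insert_le _ _).trans (Nat.succ_le_succ ?_)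
    exact (Finset.card_insert_le _ _).trans (by simp)
  calc n = (univ : Finset (Fin n)).card := h1
    _ ≤ _ := h2
    _ ≤ ∑ j ∈ Z, ({j, j - 1, j - 1 - 1, j - 1 - 1 - 1} : Finset (Fin n)).card := h3
    _ ≤ ∑ _j ∈ Z, 4 := Finset.sum_le_sum (fun j _ => h4 j)
    _ = 4 * Z.card := by rw [Finset.sum_const, smul_eq_mul, mul_comm]

lemma fin_sub_one_ne_add_one {n : ℕ} [NeZero n] (hn : 3 ≤ n) (i : Fin n) :
    i - 1 ≠ i + 1 := by
  intro h
  have h2 : (2 : Fin n) = 0 := by open Fin.CommRing in linear_combination -h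
  have hv : (2 : Fin n).val = 2 := by
    open Fin.NatCast in have h2' : ((2 : ℕ) : Fin n) = (2 : Fin n) := by norm_cast
    rw [← h2', Fin.val_natCast, Nat.mod_eq_of_lt (by omega)]
  rw [h2] at hv
  simp at hv

lemma fin_sub_one_val {n : ℕ} [NeZero n] (hn : 3 ≤ n) (k : Fin n) (hk : 1 ≤ k.val) :
    (k - 1).val = k.val - 1 := by
  rw [Fin.sub_def]
  have h1 : ((1 : Fin n)).val = 1 := Fin.val_one' n |>.trans (Nat.mod_eq_of_lt (by omega))
  simp only [h1]
  have hk2 := k.isLt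
  have h : n - 1 + k.val = (k.val - 1) + n := by omega
  rw [h, Nat.add_mod_right, Nat.mod_eq_of_lt (by omega)]

/-- On `G_n = K₁ ∨ C_n` with thresholds ⌈deg(v)/2⌉ the minimum size of a dynamic
monopoly is 2, while every weak dynamic monopoly has size at least n/4. -/
theorem wheel_dyn_small_wdyn_large (n : ℕ) (hn : 3 ≤ n) :
    dyn (wheel n) (wheelThreshold n) = 2 ∧
    ∀ D : Finset (Option (Fin n)), IsWDM (wheel n) (wheelThreshold n) D →
      (n : ℝ) / 4 ≤ D.card := by
  haveI : NeZero n := ⟨by omega⟩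
  constructor
  · -- dyn = 2
    have hup : 2 ∈ {m | ∃ D : Finset (Option (Fin n)),
        IsDyn (wheel n) (wheelThreshold n) D ∧ D.card = m} := by
      refine ⟨{none, some (0 : Fin n)}, ⟨fun v => match v with
        | none => 0
        | some k => k.val, ?_, ?_⟩, ?_⟩
      · -- IsDynLayers
        intro v hv
        match v with
        | none => simp at hv
        | some k =>
          have hk : 1 ≤ k.val := hv
          have hsub : ({none, some (k - 1)} : Finset (Option (Fin n))) ⊆
              ((wheel n).neighborFinset (some k)).filter
                (fun u => (match u with | none => 0 | some j => j.val) < k.val) := by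
            intro x hx
            simp only [Finset.mem_insert, Finset.mem_singleton] at hx
            rcases hx with rfl | rfl
            · rw [Finset.mem_filter, SimpleGraph.mem_neighborFinset]
              exact ⟨wheel_adj_some_none k, by show 0 < k.val; omega⟩
            · rw [Finset.mem_filter, SimpleGraph.mem_neighborFinset]
              refine ⟨wheel_adj_some_sub_one hn k, ?_⟩
              simp only
              rw [fin_sub_one_val hn k hk]
              omega
          have hcard : ({none, some (k - 1)} : Finset (Option (Fin n))).card = 2 := by
            rw [Finset.card_insert_of_notMem (by simp), Finset.card_singleton]
          have hle := Finset.card_le_card hsub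
          rw [hcard] at hle
          exact hle
      · -- membership characterization
        intro v
        match v with
        | none => simp
        | some k =>
          simp only [Finset.mem_insert, Finset.mem_singleton, Option.some.injEq]
          constructor
          · rintro (h | rfl)
            · exact absurd h (by simp)
            · simp
          · intro h
            right
            exact Fin.ext (by simpa using h)
      · exact Finset.card_pair (by simp)
    refine le_antisymm (Nat.sInf_le hup) (le_csInf ⟨2, hup⟩ ?_)
    rintro m ⟨D, ⟨L, hL, hmem⟩, rfl⟩
    by_contra hcon
    push_neg at hcon
    have hDcard : D.card ≤ 1 := by omega
    -- there is a cycle vertex with nonzero layer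
    have hex : ∃ i : Fin n, L (some i) ≠ 0 := by
      by_contra hall
      push_neg at hall
      have hsub : (univ.image (fun i : Fin n => some i)) ⊆ D := by
        intro v hv
        simp only [Finset.mem_image, Finset.mem_univ, true_and] at hv
        obtain ⟨i, rfl⟩ := hv
        exact (hmem _).2 (hall i)
      have hle := Finset.card_le_card hsub
      rw [Finset.card_image_of_injective _ (Option.some_injective _),
        Finset.card_univ, Fintype.card_fin] at hle
      omega
    obtain ⟨i0, hi0⟩ := hex
    obtain ⟨i, hiS, hmin⟩ := Finset.exists_min_image
      (univ.filter (fun i : Fin n => L (some i) ≠ 0)) (fun i => L (some i))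
      ⟨i0, by simp [hi0]⟩
    simp only [Finset.mem_filter, Finset.mem_univ, true_and] at hiS
    have hmin' : ∀ j : Fin n, L (some j) ≠ 0 → L (some i) ≤ L (some j) := by
      intro j hj
      exact hmin j (by simp [hj])
    have hcyc : ∀ j : Fin n, L (some j) < L (some i) → L (some j) = 0 := by
      intro j hj
      by_contra hj0
      have := hmin' j hj0
      omega
    have hpair : ∀ u v : Option (Fin n), u ≠ v → u ∈ D → v ∈ D → False := by
      intro u v huv hu hv
      have hsub : ({u, v} : Finset (Option (Fin n))) ⊆ D := by
        intro x hx
        simp only [Finset.mem_insert, Finset.mem_singleton] at hx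
        rcases hx with rfl | rfl <;> assumption
      have hle2 := Finset.card_le_card hsub
      rw [Finset.card_pair huv] at hle2
      omega
    have hhub : L none < L (some i) → L none = 0 := by
      intro hlt
      by_contra h0
      have h1 : 1 ≤ L none := Nat.one_le_iff_ne_zero.mpr h0
      have ht := hL none h1
      have h2 : 2 ≤ (((wheel n).neighborFinset none).filter
          (fun u => L u < L none)).card := by
        refine le_trans ?_ ht
        show 2 ≤ (n + 1) / 2
        omega
      obtain ⟨j, k, hjk, hPj, hPk⟩ := hub_two h2
      have hj0 : L (some j) = 0 := hcyc j (lt_trans hPj hlt)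
      have hk0 : L (some k) = 0 := hcyc k (lt_trans hPk hlt)
      exact hpair _ _ (by simpa using hjk) ((hmem _).2 hj0) ((hmem _).2 hk0)
    have h2 : 2 ≤ (((wheel n).neighborFinset (some i)).filter
        (fun u => L u < L (some i))).card :=
      hL (some i) (Nat.one_le_iff_ne_zero.mpr hiS)
    rcases three_nbrs hn h2 with ⟨ha, hb⟩ | ⟨ha, hb⟩ | ⟨ha, hb⟩
    · exact hpair (some (i - 1)) (some (i + 1))
        (by simpa using fin_sub_one_ne_add_one hn i)
        ((hmem _).2 (hcyc _ ha)) ((hmem _).2 (hcyc _ hb))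
    · exact hpair none (some (i - 1)) (by simp)
        ((hmem _).2 (hhub ha)) ((hmem _).2 (hcyc _ hb))
    · exact hpair none (some (i + 1)) (by simp)
        ((hmem _).2 (hhub ha)) ((hmem _).2 (hcyc _ hb))
  · -- weak dynamic monopolies are large
    rintro D ⟨L, hL, hmem⟩
    set Z := univ.filter (fun i : Fin n => L (some i) = 0) with hZ
    have hwindow : ∀ i : Fin n, i ∈ Z ∨ i + 1 ∈ Z ∨ i + 1 + 1 ∈ Z ∨ i + 1 + 1 + 1 ∈ Z := by
      intro i
      by_contra hcon
      push_neg at hcon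
      obtain ⟨g0, g1, g2, g3⟩ := hcon
      simp only [hZ, Finset.mem_filter, Finset.mem_univ, true_and] at g0 g1 g2 g3
      have F : ∀ j : Fin n, L (some j) ≠ 0 →
          (L (some (j - 1)) + 1 = L (some j) ∧ L (some (j + 1)) + 1 = L (some j)) ∨
          (L none + 1 = L (some j) ∧ L (some (j - 1)) + 1 = L (some j)) ∨
          (L none + 1 = L (some j) ∧ L (some (j + 1)) + 1 = L (some j)) := by
        intro j hj
        exact three_nbrs hn (hL (some j) (Nat.one_le_iff_ne_zero.mpr hj))
      have F0 := F i g0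
      have F1 := F (i + 1) g1
      have F2 := F (i + 1 + 1) g2
      have F3 := F (i + 1 + 1 + 1) g3
      have e1 : i + 1 - 1 = i := by open Fin.CommRing in ring
      have e2 : i + 1 + 1 - 1 = i + 1 := by open Fin.CommRing in ring
      have e3 : i + 1 + 1 + 1 - 1 = i + 1 + 1 := by open Fin.CommRing in ring
      rw [e1] at F1
      rw [e2] at F2
      rw [e3] at F3
      have p0 : L (some i) ≠ 0 := g0
      have p1 : L (some (i + 1)) ≠ 0 := g1
      have p2 : L (some (i + 1 + 1)) ≠ 0 := g2
      have p3 : L (some (i + 1 + 1 + 1)) ≠ 0 := g3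
      omega
    have hn4 : n ≤ 4 * Z.card := card_four_window Z hwindow
    have hZD : Z.card ≤ D.card := by
      have hsub : Z.image (fun i => (some i : Option (Fin n))) ⊆ D := by
        intro v hv
        simp only [Finset.mem_image] at hv
        obtain ⟨j, hj, rfl⟩ := hv
        simp only [hZ, Finset.mem_filter, Finset.mem_univ, true_and] at hj
        exact (hmem _).2 hj
      have := Finset.card_le_card hsub
      rwa [Finset.card_image_of_injective _ (Option.some_injective _)] at this
    rw [div_le_iff₀ (by norm_num : (0 : ℝ) < 4)]
    have : (n : ℝ) ≤ 4 * (D.card : ℝ) := by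
      have hh : n ≤ 4 * D.card := le_trans hn4 (by omega)
      exact_mod_cast hh
    linarith
end

section
/- Let m ≥ 1 and let G be the graph formed by m disjoint triangles together with a central vertex v adjacent to exactly one vertex of each triangle, with strict majority thresholds. Then the minimum size of a weak dynamic monopoly of G equals 2m = ⌊2|V(G)|/3⌋. -/
open SimpleGraph Finset
open scoped Classical

/-- `m` disjoint triangles plus a central vertex `none` joined to the vertex
`(i, 0)` of each triangle `i`. -/
def spokeTriangles (m : ℕ) : SimpleGraph (Option (Fin m × Fin 3)) where
  Adj x y := x ≠ y ∧
    ((∃ i a b, x = some (i, a) ∧ y = some (i, b)) ∨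
     (x = none ∧ ∃ i, y = some (i, 0)) ∨
     (y = none ∧ ∃ i, x = some (i, 0)))
  symm := by
    constructor
    rintro x y ⟨hne, h⟩
    refine ⟨hne.symm, ?_⟩
    rcases h with ⟨i, a, b, hx, hy⟩ | h | h
    · exact Or.inl ⟨i, b, a, hy, hx⟩
    · exact Or.inr (Or.inr ⟨h.1, h.2⟩)
    · exact Or.inr (Or.inl ⟨h.1, h.2⟩)
  loopless := by constructor; rintro x ⟨hne, -⟩; exact hne rfl

lemma spoke_adj {m : ℕ} (x y : Option (Fin m × Fin 3)) :
    (spokeTriangles m).Adj x y ↔ x ≠ y ∧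
    ((∃ i a b, x = some (i, a) ∧ y = some (i, b)) ∨
     (x = none ∧ ∃ i, y = some (i, 0)) ∨
     (y = none ∧ ∃ i, x = some (i, 0))) := Iff.rfl

lemma nf1 {m : ℕ} (i : Fin m) :
    (spokeTriangles m).neighborFinset (some (i, 1)) = {some (i, 0), some (i, 2)} := by
  ext u
  rw [mem_neighborFinset, spoke_adj]
  simp only [mem_insert, mem_singleton]
  constructor
  · rintro ⟨hne, ⟨j, a, b, hx, hy⟩ | ⟨h, -⟩ | ⟨-, j, h⟩⟩
    · rw [Option.some.injEq, Prod.mk.injEq] at hx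
      obtain ⟨rfl, rfl⟩ := hx
      subst hy
      have hb : b ≠ 1 := fun h => hne (by simp [h])
      fin_cases b <;> simp_all
    · simp at h
    · rw [Option.some.injEq, Prod.mk.injEq] at h; simp at h
  · rintro (rfl | rfl)
    · exact ⟨by simp, Or.inl ⟨i, 1, 0, rfl, rfl⟩⟩
    · exact ⟨by simp, Or.inl ⟨i, 1, 2, rfl, rfl⟩⟩

lemma nf2 {m : ℕ} (i : Fin m) :
    (spokeTriangles m).neighborFinset (some (i, 2)) = {some (i, 0), some (i, 1)} := by
  ext u
  rw [mem_neighborFinset, spoke_adj]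
  simp only [mem_insert, mem_singleton]
  constructor
  · rintro ⟨hne, ⟨j, a, b, hx, hy⟩ | ⟨h, -⟩ | ⟨-, j, h⟩⟩
    · rw [Option.some.injEq, Prod.mk.injEq] at hx
      obtain ⟨rfl, rfl⟩ := hx
      subst hy
      have hb : b ≠ 2 := fun h => hne (by simp [h])
      fin_cases b <;> simp_all
    · simp at h
    · rw [Option.some.injEq, Prod.mk.injEq] at h; simp at h
  · rintro (rfl | rfl)
    · exact ⟨by simp, Or.inl ⟨i, 2, 0, rfl, rfl⟩⟩
    · exact ⟨by simp, Or.inl ⟨i, 2, 1, rfl, rfl⟩⟩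

lemma nf0 {m : ℕ} (i : Fin m) :
    (spokeTriangles m).neighborFinset (some (i, 0)) = {some (i, 1), some (i, 2), none} := by
  ext u
  rw [mem_neighborFinset, spoke_adj]
  simp only [mem_insert, mem_singleton]
  constructor
  · rintro ⟨hne, ⟨j, a, b, hx, hy⟩ | ⟨h, -⟩ | ⟨h, -⟩⟩
    · rw [Option.some.injEq, Prod.mk.injEq] at hx
      obtain ⟨rfl, rfl⟩ := hx
      subst hy
      have hb : b ≠ 0 := fun h => hne (by simp [h])
      fin_cases b <;> simp_all
    · simp at h
    · simp [h]
  · rintro (rfl | rfl | rfl)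
    · exact ⟨by simp, Or.inl ⟨i, 0, 1, rfl, rfl⟩⟩
    · exact ⟨by simp, Or.inl ⟨i, 0, 2, rfl, rfl⟩⟩
    · exact ⟨by simp, Or.inr (Or.inr ⟨rfl, i, rfl⟩)⟩


lemma nfc {m : ℕ} :
    (spokeTriangles m).neighborFinset none = univ.image (fun i : Fin m => some (i, 0)) := by
  ext u
  rw [mem_neighborFinset, spoke_adj]
  simp only [mem_image, mem_univ, true_and]
  constructor
  · rintro ⟨hne, h | h | h⟩
    · obtain ⟨j, a, b, hx, hy⟩ := h
      exact absurd hx (by simp)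
    · obtain ⟨j, hy⟩ := h
      exact ⟨j, hy.symm⟩
    · obtain ⟨h, -⟩ := h
      exact absurd h hne.symm
  · rintro ⟨j, rfl⟩
    exact ⟨by simp, Or.inr (Or.inl ⟨j, rfl⟩)⟩


lemma deg1 {m : ℕ} (i : Fin m) : (spokeTriangles m).degree (some (i, 1)) = 2 := by
  rw [← card_neighborFinset_eq_degree, nf1, card_insert_of_notMem (by simp), card_singleton]

lemma deg2 {m : ℕ} (i : Fin m) : (spokeTriangles m).degree (some (i, 2)) = 2 := by
  rw [← card_neighborFinset_eq_degree, nf2, card_insert_of_notMem (by simp), card_singleton]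

lemma deg0 {m : ℕ} (i : Fin m) : (spokeTriangles m).degree (some (i, 0)) = 3 := by
  rw [← card_neighborFinset_eq_degree, nf0, card_insert_of_notMem (by simp),
    card_insert_of_notMem (by simp), card_singleton]

lemma degc {m : ℕ} : (spokeTriangles m).degree (none : Option (Fin m × Fin 3)) = m := by
  rw [← card_neighborFinset_eq_degree, nfc,
    card_image_of_injective _ (fun a b h => by simpa using h), card_univ, Fintype.card_fin]

/-- The layer function for the upper-bound construction. -/
def ubL (m : ℕ) : Option (Fin m × Fin 3) → ℕ
  | none => 2
  | some (_, a) => if a = 0 then 1 else 0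

lemma ub_exists (m : ℕ) (hm : 1 ≤ m) :
    ∃ D : Finset (Option (Fin m × Fin 3)),
      IsWDM (spokeTriangles m) (fun v => ((spokeTriangles m).degree v + 2) / 2) D ∧
      D.card = 2 * m := by
  classical
  refine ⟨((univ : Finset (Fin m)) ×ˢ ({1, 2} : Finset (Fin 3))).image some, ⟨ubL m, ?_, ?_⟩, ?_⟩
  · intro v hv
    match v with
    | none =>
        show ((spokeTriangles m).degree none + 2) / 2 ≤ _
        rw [degc]
        refine le_trans ?_ (Finset.card_le_card_of_injOn (s := (univ : Finset (Fin m)))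
          (fun i : Fin m => some (i, 0))
          (fun i _ => ?_) (fun a _ b _ h => by simpa using h))
        · rw [card_univ, Fintype.card_fin]; omega
        · rw [Finset.mem_coe, mem_filter, mem_neighborFinset]
          constructor
          · exact ⟨by simp, Or.inr (Or.inl ⟨rfl, i, rfl⟩)⟩
          · simp [ubL]
    | some (i, a) =>
        fin_cases a
        · show ((spokeTriangles m).degree (some (i, 0)) + 2) / 2 ≤
            (((spokeTriangles m).neighborFinset (some (i, 0))).filter
              (fun u => ubL m u + 1 = ubL m (some (i, 0)))).card
          rw [deg0]
          norm_num
          refine Finset.one_lt_card.mpr ⟨some (i, 1), ?_, some (i, 2), ?_, by simp⟩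
          · rw [mem_filter, mem_neighborFinset]
            exact ⟨⟨by simp, Or.inl ⟨i, 0, 1, rfl, rfl⟩⟩, by simp [ubL]⟩
          · rw [mem_filter, mem_neighborFinset]
            exact ⟨⟨by simp, Or.inl ⟨i, 0, 2, rfl, rfl⟩⟩, by simp [ubL]⟩
        · exact absurd (show (1 : ℕ) ≤ ubL m (some (i, 1)) from hv) (by simp [ubL])
        · exact absurd (show (1 : ℕ) ≤ ubL m (some (i, 2)) from hv) (by simp [ubL])
  · intro v
    match v with
    | none => simp [ubL]
    | some (j, b) =>
        simp only [ubL, mem_image, Option.some.injEq]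
        constructor
        · rintro ⟨⟨j', b'⟩, hp, heq⟩
          rw [Prod.mk.injEq] at heq
          obtain ⟨rfl, rfl⟩ := heq
          rw [mem_product] at hp
          have hb := hp.2
          simp only [mem_insert, mem_singleton] at hb
          rcases hb with rfl | rfl <;> decide
        · intro hb
          have hb' : b ≠ 0 := by intro h; rw [h] at hb; simp at hb
          refine ⟨(j, b), ?_, rfl⟩
          rw [mem_product]
          refine ⟨mem_univ _, ?_⟩
          simp only [mem_insert, mem_singleton]
          fin_cases b <;> simp_all
  · rw [card_image_of_injective _ (Option.some_injective _), card_product, card_univ,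
      Fintype.card_fin]
    simp [mul_comm]

lemma pair_forced {m : ℕ} {L : Option (Fin m × Fin 3) → ℕ}
    (hL : IsWDMLayers (spokeTriangles m)
      (fun v => ((spokeTriangles m).degree v + 2) / 2) L) (i : Fin m) :
    (1 ≤ L (some (i, 1)) →
      L (some (i, 0)) + 1 = L (some (i, 1)) ∧ L (some (i, 2)) + 1 = L (some (i, 1))) ∧
    (1 ≤ L (some (i, 2)) →
      L (some (i, 0)) + 1 = L (some (i, 2)) ∧ L (some (i, 1)) + 1 = L (some (i, 2))) := by
  constructor
  · intro h
    have h2 := hL (some (i, 1)) h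
    simp only [deg1] at h2
    rw [nf1] at h2
    norm_num at h2
    have hfull : ({some (i, 0), some (i, 2)} : Finset (Option (Fin m × Fin 3))).filter
        (fun u => L u + 1 = L (some (i, 1))) = {some (i, 0), some (i, 2)} := by
      apply Finset.eq_of_subset_of_card_le (filter_subset _ _)
      have : ({some (i, 0), some (i, 2)} : Finset (Option (Fin m × Fin 3))).card = 2 := by
        rw [card_insert_of_notMem (by simp), card_singleton]
      omega
    constructor
    · have := hfull ▸ (mem_insert_self (some (i, 0)) {some (i, 2)})
      exact (mem_filter.mp this).2
    · have h' : some (i, 2) ∈ ({some (i, 0), some (i, 2)} : Finset (Option (Fin m × Fin 3))) := by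
        simp
      have := hfull ▸ h'
      exact (mem_filter.mp this).2
  · intro h
    have h2 := hL (some (i, 2)) h
    simp only [deg2] at h2
    rw [nf2] at h2
    norm_num at h2
    have hfull : ({some (i, 0), some (i, 1)} : Finset (Option (Fin m × Fin 3))).filter
        (fun u => L u + 1 = L (some (i, 2))) = {some (i, 0), some (i, 1)} := by
      apply Finset.eq_of_subset_of_card_le (filter_subset _ _)
      have : ({some (i, 0), some (i, 1)} : Finset (Option (Fin m × Fin 3))).card = 2 := by
        rw [card_insert_of_notMem (by simp), card_singleton]
      omega
    constructor
    · have := hfull ▸ (mem_insert_self (some (i, 0)) {some (i, 1)})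
      exact (mem_filter.mp this).2
    · have h' : some (i, 1) ∈ ({some (i, 0), some (i, 1)} : Finset (Option (Fin m × Fin 3))) := by
        simp
      have := hfull ▸ h'
      exact (mem_filter.mp this).2

lemma two_zeros {m : ℕ} {L : Option (Fin m × Fin 3) → ℕ}
    (hL : IsWDMLayers (spokeTriangles m)
      (fun v => ((spokeTriangles m).degree v + 2) / 2) L) (i : Fin m) :
    ∃ a b : Fin 3, a ≠ b ∧ L (some (i, a)) = 0 ∧ L (some (i, b)) = 0 := by
  obtain ⟨h1, h2⟩ := pair_forced hL i
  rcases Nat.eq_zero_or_pos (L (some (i, 1))) with hx1 | hx1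
  · rcases Nat.eq_zero_or_pos (L (some (i, 2))) with hx2 | hx2
    · exact ⟨1, 2, by decide, hx1, hx2⟩
    · obtain ⟨e1, e2⟩ := h2 hx2
      exact ⟨0, 1, by decide, by omega, hx1⟩
  · obtain ⟨e1, e2⟩ := h1 hx1
    rcases Nat.eq_zero_or_pos (L (some (i, 2))) with hx2 | hx2
    · exact ⟨0, 2, by decide, by omega, hx2⟩
    · obtain ⟨f1, f2⟩ := h2 hx2
      exfalso; omega

lemma lb (m : ℕ) (D : Finset (Option (Fin m × Fin 3)))
    (hD : IsWDM (spokeTriangles m) (fun v => ((spokeTriangles m).degree v + 2) / 2) D) :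
    2 * m ≤ D.card := by
  classical
  obtain ⟨L, hL, hmem⟩ := hD
  set S : Finset (Fin m × Fin 3) := univ.filter (fun p => L (some p) = 0) with hS
  have himg : S.image some ⊆ D := by
    intro u hu
    simp only [mem_image] at hu
    obtain ⟨p, hp, rfl⟩ := hu
    rw [hmem]
    exact (mem_filter.mp hp).2
  have hcard : S.card ≤ D.card := by
    calc S.card = (S.image some).card := (card_image_of_injective _ (Option.some_injective _)).symm
    _ ≤ D.card := card_le_card himg
  refine le_trans ?_ hcard
  rw [card_eq_sum_card_fiberwise (f := Prod.fst) (t := univ) (fun x _ => mem_univ _)]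
  have : ∀ i : Fin m, 2 ≤ (S.filter (fun p => p.1 = i)).card := by
    intro i
    obtain ⟨a, b, hab, ha, hb⟩ := two_zeros hL i
    refine Finset.one_lt_card.mpr ⟨(i, a), ?_, (i, b), ?_, by simp [hab]⟩
    · simp [hS, ha]
    · simp [hS, hb]
  calc 2 * m = ∑ _i : Fin m, 2 := by simp [mul_comm]
  _ ≤ ∑ i : Fin m, (S.filter (fun p => p.1 = i)).card := Finset.sum_le_sum (fun i _ => this i)

/-- For the graph of `m ≥ 1` triangles attached to a central vertex, with strict
majority thresholds ⌈(deg(v)+1)/2⌉, the minimum size of a weak dynamic monopoly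
equals `2m = ⌊2|V(G)|/3⌋`. -/
theorem wdyn_spokeTriangles (m : ℕ) (hm : 1 ≤ m) :
    wdyn (spokeTriangles m)
      (fun v => ((spokeTriangles m).degree v + 2) / 2) = 2 * m := by
  obtain ⟨D, hD, hcard⟩ := ub_exists m hm
  have hne : {n | ∃ D : Finset (Option (Fin m × Fin 3)),
      IsWDM (spokeTriangles m) (fun v => ((spokeTriangles m).degree v + 2) / 2) D ∧
      D.card = n}.Nonempty := ⟨2 * m, D, hD, hcard⟩
  apply le_antisymm
  · exact Nat.sInf_le ⟨D, hD, hcard⟩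
  · obtain ⟨D', hD', hcard'⟩ := Nat.sInf_mem hne
    rw [wdyn, ← hcard']
    exact lb m D' hD'
end

section
/- Let G be a graph on n vertices with maximum degree Δ(G) ≤ 2r+1, and let τ be a threshold assignment with τ(v) ≥ r+1 for every vertex v. If D is any τ-weak dynamic monopoly of G with processing time t, then n / (2r+2 − (2r+1)(r/(r+1))^t) ≤ |D|. -/
open SimpleGraph Finset
open scoped Classical

/-- Lower bound for the size of a weak dynamic monopoly with processing time `t`
in a graph with maximum degree at most `2r+1` and thresholds at least `r+1`. -/
theorem wdm_size_lower_bound_odd_degree {V : Type*} (G : SimpleGraph V) [Fintype V]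
    (τ : V → ℕ) (r t : ℕ) (hr : 1 ≤ r)
    (hdeg : ∀ v, G.degree v ≤ 2 * r + 1)
    (hτ : ∀ v, r + 1 ≤ τ v)
    (L : V → ℕ) (hL : IsWDMLayers G τ L) (ht : ∀ v, L v ≤ t) :
    (Fintype.card V : ℝ) / (2 * r + 2 - (2 * r + 1) * ((r : ℝ) / (r + 1)) ^ t) ≤
      (Finset.univ.filter (fun v => L v = 0)).card := by
  classical
  set layer : ℕ → Finset V := fun i => Finset.univ.filter (fun v => L v = i) with hlayer
  have hmem : ∀ (i : ℕ) (v : V), v ∈ layer i ↔ L v = i := by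
    intro i v; simp [hlayer]
  have hNfilter : ∀ (v : V) (j : ℕ),
      (G.neighborFinset v).filter (fun u => L u = j) = (layer j).filter (fun u => G.Adj v u) := by
    intro v j
    ext u
    simp only [mem_filter, mem_neighborFinset, hmem]
    tauto
  have hLstep : ∀ v : V, 1 ≤ L v →
      r + 1 ≤ ((G.neighborFinset v).filter (fun u => L u = L v - 1)).card := by
    intro v hv
    have h1 := hL v hv
    have h2 : ((G.neighborFinset v).filter (fun u => L u + 1 = L v))
        = ((G.neighborFinset v).filter (fun u => L u = L v - 1)) := by
      apply filter_congr; intro u _; constructor <;> intro h <;> omega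
    calc r + 1 ≤ τ v := hτ v
      _ ≤ _ := h1
      _ = _ := by rw [h2]
  -- double counting
  have count : ∀ i : ℕ, (r + 1) * (layer (i + 1)).card ≤
      ∑ u ∈ layer i, ((G.neighborFinset u).filter (fun w => L w = i + 1)).card := by
    intro i
    have lhs : (r + 1) * (layer (i + 1)).card ≤
        ∑ v ∈ layer (i + 1), ((G.neighborFinset v).filter (fun u => L u = i)).card := by
      rw [mul_comm, ← smul_eq_mul, ← Finset.sum_const]
      apply Finset.sum_le_sum
      intro v hv
      have hvL : L v = i + 1 := (hmem _ _).1 hv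
      have h := hLstep v (by omega)
      rw [hvL] at h
      simpa using h
    refine lhs.trans (le_of_eq ?_)
    have swap := Finset.sum_card_bipartiteAbove_eq_sum_card_bipartiteBelow
      (r := G.Adj) (s := layer (i + 1)) (t := layer i)
    calc ∑ v ∈ layer (i + 1), ((G.neighborFinset v).filter (fun u => L u = i)).card
        = ∑ v ∈ layer (i + 1), ((layer i).bipartiteAbove G.Adj v).card := by
          refine Finset.sum_congr rfl fun v _ => ?_
          rw [hNfilter]; rfl
      _ = ∑ u ∈ layer i, ((layer (i + 1)).bipartiteBelow G.Adj u).card := swap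
      _ = ∑ u ∈ layer i, ((G.neighborFinset u).filter (fun w => L w = i + 1)).card := by
          refine Finset.sum_congr rfl fun u _ => ?_
          rw [hNfilter]
          refine Finset.card_bij (fun a _ => a) ?_ (fun a _ b _ h => h) ?_
          · intro a ha
            simp only [Finset.mem_filter, Finset.mem_bipartiteBelow] at ha ⊢
            exact ⟨ha.1, ha.2.symm⟩
          · intro a ha
            simp only [Finset.mem_filter, Finset.mem_bipartiteBelow] at ha
            exact ⟨a, by simp only [Finset.mem_bipartiteBelow]; exact ⟨ha.1, ha.2.symm⟩, rfl⟩
  -- bound for the first layer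
  have b0 : (r + 1) * (layer 1).card ≤ (2 * r + 1) * (layer 0).card := by
    refine (count 0).trans ?_
    rw [mul_comm (2 * r + 1), ← smul_eq_mul, ← Finset.sum_const]
    apply Finset.sum_le_sum
    intro u _
    calc ((G.neighborFinset u).filter (fun w => L w = 0 + 1)).card
        ≤ (G.neighborFinset u).card := Finset.card_filter_le _ _
      _ = G.degree u := (G.card_neighborFinset_eq_degree u)
      _ ≤ 2 * r + 1 := hdeg u
  -- bound for later layers
  have bstep : ∀ i : ℕ, 1 ≤ i → (r + 1) * (layer (i + 1)).card ≤ r * (layer i).card := by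
    intro i hi
    refine (count i).trans ?_
    rw [mul_comm r, ← smul_eq_mul, ← Finset.sum_const]
    apply Finset.sum_le_sum
    intro u hu
    have huL : L u = i := (hmem _ _).1 hu
    have hlow := hLstep u (by omega)
    rw [huL] at hlow
    have hdisj : Disjoint ((G.neighborFinset u).filter (fun w => L w = i + 1))
        ((G.neighborFinset u).filter (fun w => L w = i - 1)) := by
      rw [Finset.disjoint_left]
      intro w hw1 hw2
      simp only [Finset.mem_filter] at hw1 hw2
      omega
    have hunion : ((G.neighborFinset u).filter (fun w => L w = i + 1)).card +
        ((G.neighborFinset u).filter (fun w => L w = i - 1)).card ≤ 2 * r + 1 := by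
      rw [← Finset.card_union_of_disjoint hdisj]
      calc _ ≤ (G.neighborFinset u).card := by
              apply Finset.card_le_card
              exact Finset.union_subset (Finset.filter_subset _ _) (Finset.filter_subset _ _)
        _ = G.degree u := G.card_neighborFinset_eq_degree u
        _ ≤ 2 * r + 1 := hdeg u
    omega
  -- geometric decay (natural number version)
  have pow_bound : ∀ i : ℕ, (r + 1) ^ (i + 1) * (layer (i + 1)).card ≤
      (2 * r + 1) * r ^ i * (layer 0).card := by
    intro i
    induction i with
    | zero => simpa using b0
    | succ i ih =>
      have h1 := bstep (i + 1) (by omega)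
      calc (r + 1) ^ (i + 2) * (layer (i + 2)).card
          = (r + 1) ^ (i + 1) * ((r + 1) * (layer (i + 2)).card) := by ring
        _ ≤ (r + 1) ^ (i + 1) * (r * (layer (i + 1)).card) :=
            Nat.mul_le_mul_left _ h1
        _ = r * ((r + 1) ^ (i + 1) * (layer (i + 1)).card) := by ring
        _ ≤ r * ((2 * r + 1) * r ^ i * (layer 0).card) := Nat.mul_le_mul_left _ ih
        _ = (2 * r + 1) * r ^ (i + 1) * (layer 0).card := by ring
  -- pass to reals
  set R : ℝ := (r : ℝ) with hRdef
  have hR1 : (1 : ℝ) ≤ R := by rw [hRdef]; exact_mod_cast hr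
  have hRpos : (0 : ℝ) < R + 1 := by linarith
  set q : ℝ := R / (R + 1) with hqdef
  have hq0 : 0 ≤ q := div_nonneg (by linarith) hRpos.le
  have hq1 : q < 1 := (div_lt_one hRpos).2 (by linarith)
  have real_bound : ∀ i : ℕ, ((layer (i + 1)).card : ℝ) ≤
      (2 * R + 1) / (R + 1) * q ^ i * (layer 0).card := by
    intro i
    have h := pow_bound i
    have hcast : (R + 1) ^ (i + 1) * ((layer (i + 1)).card : ℝ) ≤
        (2 * R + 1) * R ^ i * ((layer 0).card : ℝ) := by
      rw [hRdef]; exact_mod_cast h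
    have hp : (0 : ℝ) < (R + 1) ^ (i + 1) := pow_pos hRpos _
    have h2 : ((layer (i + 1)).card : ℝ) ≤
        (2 * R + 1) * R ^ i * ((layer 0).card : ℝ) / (R + 1) ^ (i + 1) := by
      rw [le_div_iff₀ hp]
      calc ((layer (i + 1)).card : ℝ) * (R + 1) ^ (i + 1)
          = (R + 1) ^ (i + 1) * ((layer (i + 1)).card : ℝ) := by ring
        _ ≤ _ := hcast
    refine h2.trans (le_of_eq ?_)
    have h0 : (R + 1) ≠ 0 := ne_of_gt hRpos
    rw [hqdef, div_pow, pow_succ]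
    rw [div_mul_eq_div_div]
    have h0i : (R + 1) ^ i ≠ 0 := pow_ne_zero _ h0
    field_simp
  -- total count
  have htotal : (Fintype.card V : ℝ) = ∑ i ∈ Finset.range (t + 1), ((layer i).card : ℝ) := by
    have := Finset.card_eq_sum_card_fiberwise
      (f := L) (s := (Finset.univ : Finset V)) (t := Finset.range (t + 1))
      (fun v _ => Finset.mem_range.2 (Nat.lt_succ_of_le (ht v)))
    rw [← Finset.card_univ]
    exact_mod_cast congrArg (Nat.cast (R := ℝ)) this
  set N0 : ℝ := ((layer 0).card : ℝ) with hN0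
  have hN0nn : 0 ≤ N0 := by positivity
  -- geometric sum
  have hgeom : ∑ i ∈ Finset.range t, q ^ i = (1 - q ^ t) * (R + 1) := by
    have hqne : q ≠ 1 := ne_of_lt hq1
    rw [geom_sum_eq hqne]
    have hq1' : q - 1 = -(1 / (R + 1)) := by
      rw [hqdef]; field_simp; ring
    rw [hq1']
    field_simp
    ring
  have hsum_bound : (Fintype.card V : ℝ) ≤ N0 * (2 * R + 2 - (2 * R + 1) * q ^ t) := by
    rw [htotal, Finset.sum_range_succ']
    have h1 : ∑ i ∈ Finset.range t, ((layer (i + 1)).card : ℝ) ≤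
        ∑ i ∈ Finset.range t, (2 * R + 1) / (R + 1) * q ^ i * N0 :=
      Finset.sum_le_sum fun i _ => real_bound i
    have h2 : ∑ i ∈ Finset.range t, (2 * R + 1) / (R + 1) * q ^ i * N0
        = (2 * R + 1) / (R + 1) * N0 * ((1 - q ^ t) * (R + 1)) := by
      rw [← hgeom, Finset.mul_sum]
      apply Finset.sum_congr rfl
      intro i _
      ring
    have h3 : (2 * R + 1) / (R + 1) * N0 * ((1 - q ^ t) * (R + 1))
        = N0 * ((2 * R + 1) * (1 - q ^ t)) := by
      field_simp
    have := h1.trans (le_of_eq (h2.trans h3))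
    calc (∑ i ∈ Finset.range t, ((layer (i + 1)).card : ℝ)) + ((layer 0).card : ℝ)
        ≤ N0 * ((2 * R + 1) * (1 - q ^ t)) + N0 := by
          rw [← hN0]; linarith
      _ = N0 * (2 * R + 2 - (2 * R + 1) * q ^ t) := by ring
  have hqt1 : q ^ t ≤ 1 := pow_le_one₀ hq0 hq1.le
  have hD : (0 : ℝ) < 2 * R + 2 - (2 * R + 1) * q ^ t := by
    nlinarith [mul_le_of_le_one_right (by linarith : (0:ℝ) ≤ 2 * R + 1) hqt1]
  have hgoal : (Fintype.card V : ℝ) / (2 * R + 2 - (2 * R + 1) * q ^ t) ≤ N0 := by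
    rw [div_le_iff₀ hD]
    linarith [hsum_bound]
  convert hgoal using 2 <;> push_cast <;> ring_nf
end

section
/- Let G be a graph with maximum degree Δ(G) ≤ 2r+1 and thresholds τ(v) ≥ r+1 for all v, and let D partition V(G) as D₀=D, D₁, …, D_t witnessing a weak dynamic monopoly. Then |D_{i+1}| ≤ (r/(r+1))|D_i| for every 1 ≤ i ≤ t−1, and |D₁| ≤ ((2r+1)/(r+1))|D₀|. -/
open SimpleGraph Finset
open scoped Classical

private lemma wdm_sum_adj_comm {V : Type*} (G : SimpleGraph V) [Fintype V] (A B : Finset V) :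
    ∑ v ∈ A, (B.filter (fun u => G.Adj v u)).card
      = ∑ u ∈ B, (A.filter (fun v => G.Adj u v)).card := by
  simp only [Finset.card_filter]
  rw [Finset.sum_comm]
  refine Finset.sum_congr rfl fun u _ => Finset.sum_congr rfl fun v _ => ?_
  simp [G.adj_comm]

/-- Successive layer cardinality bounds for a weak dynamic monopoly in a graph
with maximum degree at most `2r+1` and thresholds at least `r+1`:
`|D_{i+1}| ≤ (r/(r+1))|D_i|` for `1 ≤ i ≤ t-1`, and `|D₁| ≤ ((2r+1)/(r+1))|D₀|`. -/
theorem wdm_layer_cardinality_bounds {V : Type*} (G : SimpleGraph V) [Fintype V]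
    (τ : V → ℕ) (r t : ℕ) (hr : 1 ≤ r)
    (hdeg : ∀ v, G.degree v ≤ 2 * r + 1)
    (hτ : ∀ v, r + 1 ≤ τ v)
    (L : V → ℕ) (hL : IsWDMLayers G τ L) (ht : ∀ v, L v ≤ t) :
    (∀ i, 1 ≤ i → i + 1 ≤ t →
      ((Finset.univ.filter (fun v => L v = i + 1)).card : ℝ) ≤
        (r : ℝ) / (r + 1) * (Finset.univ.filter (fun v => L v = i)).card) ∧
    ((Finset.univ.filter (fun v => L v = 1)).card : ℝ) ≤
      (2 * r + 1 : ℝ) / (r + 1) * (Finset.univ.filter (fun v => L v = 0)).card := by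
  classical
  -- main counting lemma
  have key : ∀ i c : ℕ,
      (∀ u, L u = i →
        (((Finset.univ.filter (fun v => L v = i + 1)).filter (fun v => G.Adj u v)).card ≤ c)) →
      (r + 1) * (Finset.univ.filter (fun v => L v = i + 1)).card
        ≤ c * (Finset.univ.filter (fun v => L v = i)).card := by
    intro i c hc
    set A := Finset.univ.filter (fun v => L v = i + 1) with hA
    set B := Finset.univ.filter (fun v => L v = i) with hB
    have lower : ∀ v ∈ A, r + 1 ≤ (B.filter (fun u => G.Adj v u)).card := by
      intro v hv
      have hvL : L v = i + 1 := (Finset.mem_filter.mp hv).2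
      have h1 : 1 ≤ L v := by omega
      have hset : (G.neighborFinset v).filter (fun u => L u + 1 = L v)
          = B.filter (fun u => G.Adj v u) := by
        ext u
        simp only [Finset.mem_filter, SimpleGraph.mem_neighborFinset, hB, Finset.mem_univ,
          true_and, hvL]
        constructor
        · rintro ⟨ha, hb⟩; exact ⟨by omega, ha⟩
        · rintro ⟨ha, hb⟩; exact ⟨hb, by omega⟩
      calc r + 1 ≤ τ v := hτ v
        _ ≤ ((G.neighborFinset v).filter (fun u => L u + 1 = L v)).card := hL v h1
        _ = (B.filter (fun u => G.Adj v u)).card := by rw [hset]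
    calc (r + 1) * A.card = ∑ _v ∈ A, (r + 1) := by rw [Finset.sum_const, smul_eq_mul, mul_comm]
      _ ≤ ∑ v ∈ A, (B.filter (fun u => G.Adj v u)).card := Finset.sum_le_sum lower
      _ = ∑ u ∈ B, (A.filter (fun v => G.Adj u v)).card := wdm_sum_adj_comm G A B
      _ ≤ ∑ _u ∈ B, c := Finset.sum_le_sum fun u hu => hc u (Finset.mem_filter.mp hu).2
      _ = c * B.card := by rw [Finset.sum_const, smul_eq_mul, mul_comm]
  constructor
  · intro i hi _
    have hc : ∀ u, L u = i →
        (((Finset.univ.filter (fun v => L v = i + 1)).filter (fun v => G.Adj u v)).card ≤ r) := by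
      intro u hu
      set S1 := (G.neighborFinset u).filter (fun w => L w + 1 = L u) with hS1
      set S2 := (G.neighborFinset u).filter (fun w => L w = i + 1) with hS2
      have hcard : ((Finset.univ.filter (fun v => L v = i + 1)).filter (fun v => G.Adj u v)).card
          = S2.card := by
        congr 1
        ext w
        simp only [Finset.mem_filter, Finset.mem_univ, true_and,
          SimpleGraph.mem_neighborFinset, hS2]
        tauto
      have hdisj : Disjoint S1 S2 := by
        rw [Finset.disjoint_left]
        intro w hw1 hw2
        have h1 := (Finset.mem_filter.mp hw1).2
        have h2 := (Finset.mem_filter.mp hw2).2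
        omega
      have hsub : S1 ∪ S2 ⊆ G.neighborFinset u := by
        intro w hw
        rcases Finset.mem_union.mp hw with h | h
        · exact (Finset.mem_filter.mp h).1
        · exact (Finset.mem_filter.mp h).1
      have htot : S1.card + S2.card ≤ 2 * r + 1 := by
        calc S1.card + S2.card = (S1 ∪ S2).card := (Finset.card_union_of_disjoint hdisj).symm
          _ ≤ (G.neighborFinset u).card := Finset.card_le_card hsub
          _ = G.degree u := G.card_neighborFinset_eq_degree u
          _ ≤ 2 * r + 1 := hdeg u
      have hS1big : r + 1 ≤ S1.card := le_trans (hτ u) (hL u (by omega))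
      omega
    have hnat := key i r hc
    have hpos : (0 : ℝ) < (r : ℝ) + 1 := by positivity
    rw [div_mul_eq_mul_div, le_div_iff₀ hpos]
    have := (Nat.cast_le (α := ℝ)).mpr hnat
    push_cast at this ⊢
    nlinarith [this]
  · have hc : ∀ u, L u = 0 →
        (((Finset.univ.filter (fun v => L v = 0 + 1)).filter (fun v => G.Adj u v)).card
          ≤ 2 * r + 1) := by
      intro u _
      calc ((Finset.univ.filter (fun v => L v = 0 + 1)).filter (fun v => G.Adj u v)).card
          ≤ (G.neighborFinset u).card := by
            apply Finset.card_le_card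
            intro w hw
            exact (SimpleGraph.mem_neighborFinset ..).mpr (Finset.mem_filter.mp hw).2
        _ = G.degree u := G.card_neighborFinset_eq_degree u
        _ ≤ 2 * r + 1 := hdeg u
    have hnat := key 0 (2 * r + 1) hc
    have hpos : (0 : ℝ) < (r : ℝ) + 1 := by positivity
    rw [div_mul_eq_mul_div, le_div_iff₀ hpos]
    have := (Nat.cast_le (α := ℝ)).mpr hnat
    push_cast at this ⊢
    nlinarith [this]
end

section
/- Let G be a 2r-regular graph on n vertices with constant threshold τ(v) = r+1 for every v, and let D be any weak dynamic monopoly with processing time t. Then n / (1 + r(1 − ((r−1)/(r+1))^t)) ≤ |D|. -/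
open SimpleGraph Finset
open scoped Classical

section AuxSwap
variable {V : Type*} (G : SimpleGraph V)

private lemma swap_count_aux (A B : Finset V) :
    ∑ v ∈ A, (B.filter (fun u => G.Adj v u)).card
      = ∑ u ∈ B, (A.filter (fun v => G.Adj u v)).card := by
  simp only [card_filter]
  rw [Finset.sum_comm]
  simp_rw [G.adj_comm]

end AuxSwap

/-- Lower bound for the size of a weak dynamic monopoly with processing time `t`
in a `2r`-regular graph with constant threshold `r+1`. -/
theorem wdm_size_lower_bound_even_regular {V : Type*} (G : SimpleGraph V) [Fintype V]
    (r t : ℕ) (hr : 1 ≤ r)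
    (hreg : ∀ v, G.degree v = 2 * r)
    (L : V → ℕ) (hL : IsWDMLayers G (fun _ => r + 1) L) (ht : ∀ v, L v ≤ t) :
    (Fintype.card V : ℝ) / (1 + r * (1 - (((r : ℝ) - 1) / ((r : ℝ) + 1)) ^ t)) ≤
      (Finset.univ.filter (fun v => L v = 0)).card := by
  classical
  set q : ℝ := ((r : ℝ) - 1) / ((r : ℝ) + 1) with hqdef
  have hr1 : (1 : ℝ) ≤ (r : ℝ) := by exact_mod_cast hr
  have hrp : (0 : ℝ) < (r : ℝ) + 1 := by linarith
  have hq0 : 0 ≤ q := div_nonneg (by linarith) hrp.le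
  have hq1 : q ≤ 1 := by rw [hqdef, div_le_one hrp]; linarith
  set D : ℕ → Finset V := fun i => univ.filter (fun v => L v = i) with hD
  set c : ℕ → ℕ := fun i => (D i).card with hc
  -- the neighborhood filter as a filter of D i
  have hnb : ∀ (v : V) (i : ℕ),
      (G.neighborFinset v).filter (fun u => L u = i) = (D i).filter (fun u => G.Adj v u) := by
    intro v i
    ext u
    simp [hD, mem_neighborFinset, and_comm]
  -- lower bound on in-neighbors for layer vertices
  have hlow : ∀ (i : ℕ) (v : V), L v = i + 1 →
      r + 1 ≤ ((D i).filter (fun u => G.Adj v u)).card := by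
    intro i v hv
    have h := hL v (by omega)
    have : (G.neighborFinset v).filter (fun u => L u + 1 = L v)
        = (G.neighborFinset v).filter (fun u => L u = i) := by
      apply filter_congr
      intro u _
      simp [hv]
    rw [this, hnb] at h
    exact h
  -- key counting: (r+1) * c (i+1) ≤ ∑ over D i of out-degrees into D (i+1)
  have hkey : ∀ i : ℕ, (r + 1) * c (i + 1)
      ≤ ∑ u ∈ D i, ((D (i + 1)).filter (fun v => G.Adj u v)).card := by
    intro i
    rw [← swap_count_aux]
    calc (r + 1) * c (i + 1) = ∑ _v ∈ D (i + 1), (r + 1) := by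
          rw [sum_const, smul_eq_mul, mul_comm]
      _ ≤ ∑ v ∈ D (i + 1), ((D i).filter (fun u => G.Adj v u)).card := by
          apply sum_le_sum
          intro v hv
          exact hlow i v (by simpa [hD] using hv)
  -- bound each out-degree
  have hdeg : ∀ (u : V) (i : ℕ), ((D i).filter (fun v => G.Adj u v)).card ≤ 2 * r := by
    intro u i
    calc ((D i).filter (fun v => G.Adj u v)).card
        = ((G.neighborFinset u).filter (fun v => L v = i)).card := by rw [hnb]
      _ ≤ (G.neighborFinset u).card := card_filter_le _ _
      _ = 2 * r := by rw [card_neighborFinset_eq_degree, hreg]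
  have hdeg' : ∀ (i : ℕ) (u : V), L u = i + 1 →
      ((D (i + 2)).filter (fun v => G.Adj u v)).card ≤ r - 1 := by
    intro i u hu
    have h1 : r + 1 ≤ ((D i).filter (fun v => G.Adj u v)).card := hlow i u hu
    have hdisj : Disjoint ((D i).filter (fun v => G.Adj u v))
        ((D (i + 2)).filter (fun v => G.Adj u v)) := by
      rw [Finset.disjoint_left]
      intro a ha hb
      simp only [hD, mem_filter, mem_univ, true_and] at ha hb
      omega
    have hsub : ((D i).filter (fun v => G.Adj u v)) ∪ ((D (i + 2)).filter (fun v => G.Adj u v))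
        ⊆ G.neighborFinset u := by
      intro a ha
      rw [mem_union] at ha
      rcases ha with ha | ha <;>
        · rw [mem_filter] at ha
          rw [mem_neighborFinset]
          exact ha.2
    have := card_le_card hsub
    rw [card_union_of_disjoint hdisj, card_neighborFinset_eq_degree, hreg] at this
    omega
  -- natural-number recursions
  have h1 : (r + 1) * c 1 ≤ 2 * r * c 0 := by
    calc (r + 1) * c 1 ≤ ∑ u ∈ D 0, ((D 1).filter (fun v => G.Adj u v)).card := hkey 0
      _ ≤ ∑ _u ∈ D 0, 2 * r := sum_le_sum fun u _ => hdeg u 1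
      _ = 2 * r * c 0 := by rw [sum_const, smul_eq_mul, mul_comm]
  have h2 : ∀ i : ℕ, (r + 1) * c (i + 2) ≤ (r - 1) * c (i + 1) := by
    intro i
    calc (r + 1) * c (i + 2) ≤ ∑ u ∈ D (i + 1), ((D (i + 2)).filter (fun v => G.Adj u v)).card :=
        hkey (i + 1)
      _ ≤ ∑ _u ∈ D (i + 1), (r - 1) := by
          apply sum_le_sum
          intro u hu
          exact hdeg' i u (by simpa [hD] using hu)
      _ = (r - 1) * c (i + 1) := by rw [sum_const, smul_eq_mul, mul_comm]
  -- real recursions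
  have hcast : ((r - 1 : ℕ) : ℝ) = (r : ℝ) - 1 := by
    push_cast [Nat.cast_sub hr]; ring
  have hrec : ∀ i : ℕ, (c (i + 1) : ℝ) ≤ 2 * r / (r + 1) * q ^ i * c 0 := by
    intro i
    induction i with
    | zero =>
      have : ((r : ℝ) + 1) * c 1 ≤ 2 * r * c 0 := by exact_mod_cast h1
      rw [pow_zero, mul_one, div_mul_eq_mul_div, le_div_iff₀ hrp]
      nlinarith
    | succ n ih =>
      have h2' : ((r : ℝ) + 1) * c (n + 2) ≤ ((r : ℝ) - 1) * c (n + 1) := by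
        have := h2 n
        have : ((r - 1 : ℕ) : ℝ) * c (n + 1) ≥ ((r + 1 : ℕ) : ℝ) * c (n + 2) := by
          exact_mod_cast this
        rw [hcast] at this
        push_cast at this ⊢
        linarith
      have hq' : (c (n + 2) : ℝ) ≤ q * c (n + 1) := by
        rw [hqdef, div_mul_eq_mul_div, le_div_iff₀ hrp]
        nlinarith
      calc (c (n + 1 + 1) : ℝ) ≤ q * c (n + 1) := hq'
        _ ≤ q * (2 * r / (r + 1) * q ^ n * c 0) := by
            exact mul_le_mul_of_nonneg_left ih hq0
        _ = 2 * r / (r + 1) * q ^ (n + 1) * c 0 := by ring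
  -- total count
  have htotal : (Fintype.card V : ℕ) = ∑ i ∈ range (t + 1), c i := by
    rw [← card_univ]
    apply card_eq_sum_card_fiberwise (f := L) (t := range (t + 1))
    intro v _
    rw [mem_coe, mem_range]
    exact Nat.lt_succ_of_le (ht v)
  -- geometric sum identity
  have hgeom : 2 * (r : ℝ) / (r + 1) * ∑ i ∈ range t, q ^ i = r * (1 - q ^ t) := by
    have h := geom_sum_mul q t
    have hq1' : q - 1 = -(2 / ((r : ℝ) + 1)) := by
      rw [hqdef]
      field_simp
      ring
    rw [hq1'] at h
    have h2r : (2 : ℝ) / (r + 1) ≠ 0 := by positivity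
    field_simp at h ⊢
    nlinarith [h]
  -- combine
  have hc0 : (0 : ℝ) ≤ (c 0 : ℝ) := Nat.cast_nonneg _
  have hsum : (Fintype.card V : ℝ) ≤ (c 0 : ℝ) * (1 + r * (1 - q ^ t)) := by
    have : (Fintype.card V : ℝ) = ∑ i ∈ range (t + 1), (c i : ℝ) := by
      rw [htotal]; push_cast; ring
    rw [this, Finset.sum_range_succ']
    have hb : ∑ i ∈ range t, (c (i + 1) : ℝ)
        ≤ ∑ i ∈ range t, 2 * r / (r + 1) * q ^ i * c 0 :=
      sum_le_sum fun i _ => hrec i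
    have hb2 : ∑ i ∈ range t, 2 * (r : ℝ) / (r + 1) * q ^ i * c 0
        = (2 * r / (r + 1) * ∑ i ∈ range t, q ^ i) * c 0 := by
      simp [Finset.sum_mul, Finset.mul_sum, mul_assoc]
    rw [hb2, hgeom] at hb
    nlinarith
  -- final division step
  have hqt : q ^ t ≤ 1 := pow_le_one₀ hq0 hq1
  have hpos : (0 : ℝ) < 1 + r * (1 - q ^ t) := by nlinarith
  rw [div_le_iff₀ hpos]
  have hD0 : (univ.filter (fun v => L v = 0)).card = c 0 := rfl
  rw [hD0]
  linarith [hsum]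
end

section
/- Let G be a graph with a threshold assignment τ where τ(v) ≥ k ≥ 1 for every vertex v, and let D₀ be a weak dynamic monopoly with witnessing partition D₀, D₁, …, D_t. Then for every i with 0 ≤ i ≤ t−1 and every set of k distinct vertices u₁,…,u_k ∈ D_i, there exist k internally disjoint paths of length i, each starting in D₀, ending at u₁,…,u_k respectively, and containing exactly one vertex from each D_j for 0 ≤ j ≤ i. -/
open SimpleGraph Finset
open scoped Classical

/-- In a weak dynamic monopoly partition with all thresholds at least `k`, any
`k` distinct vertices of layer `i` (`i ≤ t-1`) are the endpoints of `k`
pairwise disjoint paths of length `i` starting in layer 0 and meeting each layer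
`0, …, i` in exactly one vertex. -/
theorem wdm_disjoint_paths {V : Type*} (G : SimpleGraph V) [Fintype V]
    (τ : V → ℕ) (k t : ℕ) (hk : 1 ≤ k) (hτ : ∀ v, k ≤ τ v)
    (L : V → ℕ) (hL : IsWDMLayers G τ L) (ht : ∀ v, L v ≤ t)
    (i : ℕ) (hi : i ≤ t - 1)
    (u : Fin k → V) (hu_inj : Function.Injective u) (hu : ∀ j, L (u j) = i) :
    ∃ f : Fin k → ℕ → V,
      (∀ j, ∀ s ≤ i, L (f j s) = s) ∧
      (∀ j, ∀ s < i, G.Adj (f j s) (f j (s + 1))) ∧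
      (∀ j, f j i = u j) ∧
      (∀ j j' : Fin k, ∀ s ≤ i, ∀ s' ≤ i, f j s = f j' s' → j = j') := by
  clear hi
  induction i generalizing u with
  | zero =>
    refine ⟨fun j _ => u j, ?_, ?_, fun j => rfl, fun j j' s hs s' hs' h => hu_inj h⟩
    · intro j s hs
      have : s = 0 := by omega
      subst this; exact hu j
    · intro j s hs; omega
  | succ n ih =>
    set T : Fin k → Finset V :=
      fun j => (G.neighborFinset (u j)).filter (fun w => L w + 1 = L (u j)) with hT
    have hcard : ∀ j, k ≤ (T j).card := fun j =>
      le_trans (hτ _) (hL _ (by rw [hu]; omega))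
    have hall : ∀ s : Finset (Fin k), s.card ≤ (s.biUnion T).card := by
      intro s
      rcases s.eq_empty_or_nonempty with rfl | ⟨j, hj⟩
      · simp
      · calc s.card ≤ (Finset.univ : Finset (Fin k)).card := Finset.card_le_univ s
          _ = k := by simp
          _ ≤ (T j).card := hcard j
          _ ≤ (s.biUnion T).card :=
            Finset.card_le_card (fun x hx => Finset.mem_biUnion.mpr ⟨j, hj, hx⟩)
    obtain ⟨w, hw_inj, hw_mem⟩ :=
      (Finset.all_card_le_biUnion_card_iff_exists_injective T).mp hall
    have hwL : ∀ j, L (w j) = n := by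
      intro j
      have := (Finset.mem_filter.mp (hw_mem j)).2
      rw [hu] at this; omega
    have hadj : ∀ j, G.Adj (w j) (u j) := fun j =>
      (G.mem_neighborFinset _ _).mp (Finset.mem_filter.mp (hw_mem j)).1 |>.symm
    obtain ⟨f, hf1, hf2, hf3, hf4⟩ := ih w hw_inj hwL
    refine ⟨fun j s => if s = n + 1 then u j else f j s, ?_, ?_, ?_, ?_⟩
    · intro j s hs
      by_cases h : s = n + 1
      · simp [h, hu]
      · simp only [h, if_false]; exact hf1 j s (by omega)
    · intro j s hs
      by_cases h : s = n
      · simp only [if_neg (show ¬ s = n + 1 by omega), if_pos (show s + 1 = n + 1 by omega)]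
        rw [h, hf3]; exact hadj j
      · have h1 : ¬ s = n + 1 := by omega
        have h2 : ¬ s + 1 = n + 1 := by omega
        simp only [if_neg h1, if_neg h2]
        exact hf2 j s (by omega)
    · intro j; simp
    · intro j j' s hs s' hs' h
      have hLs : L (if s = n + 1 then u j else f j s) = s := by
        by_cases hc : s = n + 1
        · simp [hc, hu]
        · simp only [hc, if_false]; exact hf1 j s (by omega)
      have hLs' : L (if s' = n + 1 then u j' else f j' s') = s' := by
        by_cases hc : s' = n + 1
        · simp [hc, hu]
        · simp only [hc, if_false]; exact hf1 j' s' (by omega)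
      have h' : (if s = n + 1 then u j else f j s) = (if s' = n + 1 then u j' else f j' s') := h
      have hss : s = s' := by rw [← hLs, ← hLs', h']
      subst hss
      by_cases hc : s = n + 1
      · rw [if_pos hc, if_pos hc] at h'; exact hu_inj h'
      · rw [if_neg hc, if_neg hc] at h'
        exact hf4 j j' s (by omega) s (by omega) h'
end

section
/- Let G be a graph with thresholds τ(v) ≥ k ≥ 2 for all v, and let D be a weak dynamic monopoly with processing time t ≥ 1. Then G contains a subdivision of K_{1,k} (a starlike tree) whose central vertex has degree k and whose k branches each have length t−1 from the center's neighbors, i.e. a spider with k legs of length t. -/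
open SimpleGraph Finset
open scoped Classical

theorem wdm_aux {V : Type*} (G : SimpleGraph V) [Fintype V] (τ : V → ℕ) (k : ℕ)
    (hτ : ∀ v, k ≤ τ v) (L : V → ℕ) (hL : IsWDMLayers G τ L) :
    ∀ m : ℕ, ∀ e : Fin k → V, Function.Injective e → (∀ j, L (e j) = m) →
      ∃ f : Fin k → ℕ → V, (∀ j, f j m = e j) ∧ (∀ j s, s ≤ m → L (f j s) = s) ∧
        (∀ j s, s < m → G.Adj (f j s) (f j (s+1))) ∧
        (∀ j j' s, s ≤ m → f j s = f j' s → j = j') := by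
  intro m
  induction m with
  | zero =>
    intro e he hLe
    exact ⟨fun j _ => e j, fun j => rfl,
      fun j s hs => by simpa [Nat.le_zero.mp hs] using hLe j,
      fun j s hs => absurd hs (Nat.not_lt_zero s), fun j j' s _ h => he h⟩
  | succ m ih =>
    intro e he hLe
    set T : Fin k → Finset V :=
      fun j => (G.neighborFinset (e j)).filter (fun u => L u + 1 = L (e j)) with hT
    have hcard : ∀ j, k ≤ (T j).card := fun j =>
      le_trans (hτ (e j)) (hL (e j) (by rw [hLe j]; omega))
    obtain ⟨e', he'inj, he'mem⟩ : ∃ e' : Fin k → V, Function.Injective e' ∧ ∀ j, e' j ∈ T j := by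
      rw [← Finset.all_card_le_biUnion_card_iff_exists_injective]
      intro s
      rcases s.eq_empty_or_nonempty with rfl | ⟨j, hj⟩
      · simp
      · calc s.card ≤ k := by
              simpa using Finset.card_le_univ s
          _ ≤ (T j).card := hcard j
          _ ≤ (s.biUnion T).card :=
              Finset.card_le_card (fun x hx => Finset.mem_biUnion.mpr ⟨j, hj, hx⟩)
    have he'L : ∀ j, L (e' j) = m := by
      intro j
      have := (Finset.mem_filter.mp (he'mem j)).2
      rw [hLe j] at this; omega
    have he'adj : ∀ j, G.Adj (e j) (e' j) := fun j =>
      (SimpleGraph.mem_neighborFinset _ _ _).mp (Finset.mem_filter.mp (he'mem j)).1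
    obtain ⟨f', hf'0, hf'L, hf'adj, hf'inj⟩ := ih e' he'inj he'L
    refine ⟨fun j s => if s = m + 1 then e j else f' j s, fun j => by simp, ?_, ?_, ?_⟩
    · intro j s hs
      by_cases h : s = m + 1
      · simp [h, hLe j]
      · simp only [h, if_false]; exact hf'L j s (by omega)
    · intro j s hs
      by_cases h : s = m
      · subst h
        simpa [Nat.succ_ne_self, hf'0 j] using (he'adj j).symm
      · have h1 : s ≠ m + 1 := by omega
        have h2 : s + 1 ≠ m + 1 := by omega
        simpa [h, h1, h2] using hf'adj j s (by omega)
    · intro j j' s hs h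
      by_cases h1 : s = m + 1
      · simp only [h1, if_pos rfl] at h; exact he h
      · simp only [h1, if_false] at h; exact hf'inj j j' s (by omega) h


/-- If all thresholds are at least `k ≥ 2` and there is a weak dynamic monopoly
with processing time `t ≥ 1`, then `G` contains a starlike tree (spider): a
central vertex `c` in the last layer together with `k` pairwise disjoint paths
of length `t-1`, the paths joined to `c` at neighbors of `c` in layer `t-1`. -/
theorem wdm_starlike_tree {V : Type*} (G : SimpleGraph V) [Fintype V]
    (τ : V → ℕ) (k t : ℕ) (hk : 2 ≤ k) (ht1 : 1 ≤ t) (hτ : ∀ v, k ≤ τ v)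
    (L : V → ℕ) (hL : IsWDMLayers G τ L) (ht : ∀ v, L v ≤ t)
    (hproc : ∃ w, L w = t) :
    ∃ (c : V) (f : Fin k → ℕ → V), L c = t ∧
      (∀ j, ∀ s ≤ t - 1, L (f j s) = s) ∧
      (∀ j, ∀ s < t - 1, G.Adj (f j s) (f j (s + 1))) ∧
      (∀ j, G.Adj (f j (t - 1)) c) ∧
      (∀ j j' : Fin k, ∀ s ≤ t - 1, ∀ s' ≤ t - 1, f j s = f j' s' → j = j') := by
  obtain ⟨c, hc⟩ := hproc
  set S := (G.neighborFinset c).filter (fun u => L u + 1 = L c) with hS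
  have hcard : k ≤ S.card := le_trans (hτ c) (hL c (by omega))
  obtain ⟨emb, hemb⟩ := Function.Embedding.exists_of_card_le_finset
    (by simpa using hcard : Fintype.card (Fin k) ≤ S.card)
  have hmem : ∀ j, (emb j : V) ∈ S := fun j => hemb ⟨j, rfl⟩
  have hLe : ∀ j, L (emb j) = t - 1 := by
    intro j
    have := (Finset.mem_filter.mp (hmem j)).2
    rw [hc] at this; omega
  obtain ⟨f, hf0, hfL, hfadj, hfinj⟩ :=
    wdm_aux G τ k hτ L hL (t - 1) (fun j => emb j) emb.injective hLe
  refine ⟨c, f, hc, fun j s hs => hfL j s hs, fun j s hs => hfadj j s hs, ?_, ?_⟩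
  · intro j
    rw [hf0 j]
    exact ((SimpleGraph.mem_neighborFinset _ _ _).mp (Finset.mem_filter.mp (hmem j)).1).symm
  · intro j j' s hs s' hs' h
    have h1 : L (f j s) = s := hfL j s hs
    have h2 : L (f j' s') = s' := hfL j' s' hs'
    have : s = s' := by rw [h] at h1; omega
    subst this
    exact hfinj j j' s hs h
end

section
/- Let G be a graph with thresholds τ(v) ≥ k for all v, and let D be a weak dynamic monopoly with processing time t. Then t ≤ 2α'(G)/k + 2, where α'(G) is the maximum size of a matching in G. -/
open SimpleGraph Finset
open scoped Classical

/-- The matching number α'(G): the maximum number of independent edges. -/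
noncomputable def matchingNumber {V : Type*} (G : SimpleGraph V) [Fintype V] : ℕ :=
  sSup {n | ∃ M : G.Subgraph, M.IsMatching ∧ M.edgeSet.ncard = n}

section Aux
variable {V : Type*} {G : SimpleGraph V} [Fintype V] {τ : V → ℕ} {L : V → ℕ}

lemma hall_step {k : ℕ} (hτ : ∀ v, k ≤ τ v) (hL : IsWDMLayers G τ L)
    {m : ℕ} (hm : 1 ≤ m) (x : Fin k → V) (hx : ∀ j, L (x j) = m) :
    ∃ y : Fin k → V, Function.Injective y ∧
      ∀ j, G.Adj (x j) (y j) ∧ L (y j) + 1 = m := by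
  set s : Fin k → Finset V :=
    fun j => (G.neighborFinset (x j)).filter (fun u => L u + 1 = m) with hs
  have hcard : ∀ j, k ≤ (s j).card := by
    intro j
    have := hL (x j) (by rw [hx j]; exact hm)
    rw [hx j] at this
    exact le_trans (hτ (x j)) this
  have hall : ∀ A : Finset (Fin k), A.card ≤ (A.biUnion s).card := by
    intro A
    rcases A.eq_empty_or_nonempty with rfl | ⟨j, hj⟩
    · simp
    · calc A.card ≤ Fintype.card (Fin k) := A.card_le_univ
        _ = k := Fintype.card_fin k
        _ ≤ (s j).card := hcard j
        _ ≤ (A.biUnion s).card := Finset.card_le_card (Finset.subset_biUnion_of_mem s hj)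
  obtain ⟨y, hyinj, hy⟩ := (Finset.all_card_le_biUnion_card_iff_exists_injective s).1 hall
  refine ⟨y, hyinj, fun j => ?_⟩
  have := hy j
  rw [hs, Finset.mem_filter, SimpleGraph.mem_neighborFinset] at this
  exact this

lemma chain_exists {k t : ℕ} (hτ : ∀ v, k ≤ τ v) (hL : IsWDMLayers G τ L)
    (ht : 1 ≤ t) {w : V} (hw : L w = t) :
    ∀ i, i ≤ t - 1 → ∃ F : Fin k → ℕ → V,
      (∀ j, ∀ m ≤ i, L (F j m) = t - 1 - m) ∧
      (∀ m ≤ i, Function.Injective (fun j => F j m)) ∧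
      (∀ j, ∀ m, m < i → G.Adj (F j m) (F j (m + 1))) := by
  intro i
  induction i with
  | zero =>
    intro _
    obtain ⟨y, hyinj, hy⟩ := hall_step hτ hL (m := t) ht (fun _ => w) (fun _ => hw)
    refine ⟨fun j _ => y j, fun j m hm => ?_, fun m hm => hyinj, fun j m hm => absurd hm (by omega)⟩
    · show L (y j) = t - 1 - m; have := (hy j).2; omega
  | succ i ih =>
    intro hi
    obtain ⟨F, hF1, hF2, hF3⟩ := ih (by omega)
    obtain ⟨y, hyinj, hy⟩ := hall_step hτ hL (m := t - 1 - i) (by omega)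
      (fun j => F j i) (fun j => hF1 j i le_rfl)
    refine ⟨fun j m => if m ≤ i then F j m else y j, ?_, ?_, ?_⟩
    · intro j m hm
      by_cases h : m ≤ i
      · simp only [h, if_true]; exact hF1 j m h
      · have hm' : m = i + 1 := by omega
        simp only [h, if_false]
        have := (hy j).2; omega
    · intro m hm
      by_cases h : m ≤ i
      · simpa only [h, if_true] using hF2 m h
      · simpa only [h, if_false] using hyinj
    · intro j m hm
      by_cases h : m < i
      · simp only [show m ≤ i by omega, if_true, show m + 1 ≤ i by omega, if_true]
        exact hF3 j m h
      · have hm' : m = i := by omega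
        subst hm'
        simp only [le_refl, if_true, show ¬ (m + 1 ≤ m) by omega, if_false]
        exact (hy j).1

end Aux

lemma matching_lb {V : Type*} (G : SimpleGraph V) [Fintype V] (M : G.Subgraph)
    (hM : M.IsMatching) : M.edgeSet.ncard ≤ matchingNumber G := by
  have hbdd : BddAbove {n | ∃ M : G.Subgraph, M.IsMatching ∧ M.edgeSet.ncard = n} := by
    refine ⟨Nat.card (Sym2 V), fun n hn => ?_⟩
    obtain ⟨N, _, rfl⟩ := hn
    calc N.edgeSet.ncard ≤ (Set.univ : Set (Sym2 V)).ncard :=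
          Set.ncard_le_ncard (Set.subset_univ _) Set.finite_univ
      _ = Nat.card (Sym2 V) := Set.ncard_univ _
  exact le_csSup hbdd ⟨M, hM, rfl⟩


/-- If all thresholds are at least `k` then the processing time `t` of any weak
dynamic monopoly satisfies `t ≤ 2α'(G)/k + 2`. -/
theorem wdm_processing_time_le_matching {V : Type*} (G : SimpleGraph V) [Fintype V]
    (τ : V → ℕ) (k t : ℕ) (hk : 1 ≤ k) (hτ : ∀ v, k ≤ τ v)
    (L : V → ℕ) (hL : IsWDMLayers G τ L) (ht : ∀ v, L v ≤ t)
    (hproc : ∃ w, L w = t) :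
    (t : ℝ) ≤ 2 * matchingNumber G / k + 2 := by
  by_cases ht2 : t ≤ 2
  · have h0 : (0:ℝ) ≤ 2 * matchingNumber G / k := by positivity
    have h1 : (t:ℝ) ≤ 2 := by exact_mod_cast ht2
    linarith
  push_neg at ht2
  obtain ⟨w, hw⟩ := hproc
  obtain ⟨F, hF1, hF2, hF3⟩ := chain_exists hτ hL (by omega) hw (t-1) le_rfl
  set A := t / 2 with hA
  have hAle : ∀ a : ℕ, a < A → 2*a + 1 ≤ t - 1 := by omega
  have key : ∀ (j j' : Fin k) (m m' : ℕ), m ≤ t-1 → m' ≤ t-1 → F j m = F j' m' →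
      j = j' ∧ m = m' := by
    intro j j' m m' hm hm' heq
    have h1 := hF1 j m hm
    have h2 := hF1 j' m' hm'
    have hmm : m = m' := by rw [heq] at h1; omega
    subst hmm
    exact ⟨hF2 m hm heq, rfl⟩
  have hadj : ∀ (j : Fin k) (a : ℕ), a < A → G.Adj (F j (2*a)) (F j (2*a+1)) := by
    intro j a ha
    have := hAle a ha
    exact hF3 j (2*a) (by omega)
  set M : G.Subgraph := {
    verts := {v | ∃ j a, a < A ∧ (v = F j (2*a) ∨ v = F j (2*a+1))}
    Adj := fun v w => ∃ j a, a < A ∧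
      ((v = F j (2*a) ∧ w = F j (2*a+1)) ∨ (w = F j (2*a) ∧ v = F j (2*a+1)))
    adj_sub := by
      rintro v w ⟨j, a, ha, ⟨rfl, rfl⟩ | ⟨rfl, rfl⟩⟩
      · exact hadj j a ha
      · exact (hadj j a ha).symm
    edge_vert := by
      rintro v w ⟨j, a, ha, ⟨rfl, rfl⟩ | ⟨rfl, rfl⟩⟩
      · exact ⟨j, a, ha, Or.inl rfl⟩
      · exact ⟨j, a, ha, Or.inr rfl⟩
    symm := by
      constructor
      rintro v w ⟨j, a, ha, h⟩
      exact ⟨j, a, ha, h.symm⟩ } with hM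
  have hmatch : M.IsMatching := by
    rintro v ⟨j, a, ha, hv | hv⟩
    · refine ⟨F j (2*a+1), ⟨j, a, ha, Or.inl ⟨hv, rfl⟩⟩, ?_⟩
      rintro x ⟨j', a', ha', ⟨hv', rfl⟩ | ⟨rfl, hv'⟩⟩
      · have h2 := hAle a ha; have h2' := hAle a' ha'
        obtain ⟨hj, hm⟩ := key j j' (2*a) (2*a') (by omega) (by omega) (hv ▸ hv' ▸ rfl)
        have : a = a' := by omega
        rw [hj, this]
      · have h2 := hAle a ha; have h2' := hAle a' ha'
        obtain ⟨hj, hm⟩ := key j j' (2*a) (2*a'+1) (by omega) (by omega) (hv ▸ hv' ▸ rfl)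
        omega
    · refine ⟨F j (2*a), ⟨j, a, ha, Or.inr ⟨rfl, hv⟩⟩, ?_⟩
      rintro x ⟨j', a', ha', ⟨hv', rfl⟩ | ⟨rfl, hv'⟩⟩
      · have h2 := hAle a ha; have h2' := hAle a' ha'
        obtain ⟨hj, hm⟩ := key j j' (2*a+1) (2*a') (by omega) (by omega) (hv ▸ hv' ▸ rfl)
        omega
      · have h2 := hAle a ha; have h2' := hAle a' ha'
        obtain ⟨hj, hm⟩ := key j j' (2*a+1) (2*a'+1) (by omega) (by omega) (hv ▸ hv' ▸ rfl)
        have : a = a' := by omega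
        rw [hj, this]
  have hedge : M.edgeSet =
      Set.range (fun p : Fin k × Fin A => s(F p.1 (2*(p.2:ℕ)), F p.1 (2*(p.2:ℕ)+1))) := by
    ext e
    induction e using Sym2.ind with
    | _ v x =>
      rw [SimpleGraph.Subgraph.mem_edgeSet]
      constructor
      · rintro ⟨j, a, ha, ⟨rfl, rfl⟩ | ⟨rfl, rfl⟩⟩
        · exact ⟨(j, ⟨a, ha⟩), rfl⟩
        · exact ⟨(j, ⟨a, ha⟩), Sym2.eq_swap⟩
      · rintro ⟨⟨j, a⟩, h⟩
        rcases Sym2.eq_iff.1 h with ⟨h1, h2⟩ | ⟨h1, h2⟩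
        · exact ⟨j, a, a.isLt, Or.inl ⟨h1.symm, h2.symm⟩⟩
        · exact ⟨j, a, a.isLt, Or.inr ⟨h1.symm, h2.symm⟩⟩
  have hginj : Function.Injective
      (fun p : Fin k × Fin A => s(F p.1 (2*(p.2:ℕ)), F p.1 (2*(p.2:ℕ)+1))) := by
    rintro ⟨j, a⟩ ⟨j', a'⟩ h
    have h2 := hAle a a.isLt; have h2' := hAle a' a'.isLt
    rcases Sym2.eq_iff.1 h with ⟨h1, _⟩ | ⟨h1, _⟩
    · obtain ⟨hj, hm⟩ := key j j' (2*a) (2*a') (by omega) (by omega) h1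
      have : a = a' := by
        apply Fin.ext; omega
      rw [Prod.mk.injEq]
      exact ⟨hj, this⟩
    · obtain ⟨hj, hm⟩ := key j j' (2*a) (2*a'+1) (by omega) (by omega) h1
      omega
  have hcard : M.edgeSet.ncard = k * A := by
    rw [hedge, ← Set.image_univ, Set.ncard_image_of_injective _ hginj, Set.ncard_univ,
      Nat.card_eq_fintype_card]
    simp
  have hle : k * A ≤ matchingNumber G := hcard ▸ matching_lb G M hmatch
  have hnat2 : k * (t - 2) ≤ 2 * matchingNumber G := by
    have h3 : t - 2 ≤ 2 * A := by omega
    calc k * (t-2) ≤ k * (2*A) := Nat.mul_le_mul_left _ h3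
      _ = 2 * (k*A) := by ring
      _ ≤ 2 * matchingNumber G := by omega
  have hkpos : (0:ℝ) < k := by exact_mod_cast hk
  rw [← sub_le_iff_le_add, le_div_iff₀ hkpos]
  have h3 : 2 ≤ t := by omega
  rify [h3] at hnat2
  nlinarith [hnat2]
end

section
/- Let G be a graph with thresholds τ(v) ≥ 2 for all v, let l be the length of a longest path in G, and let D be a weak dynamic monopoly with processing time t. Then t ≤ l/2. -/
open SimpleGraph Finset
open scoped Classical

section Aux
variable {V : Type*} (G : SimpleGraph V) [Fintype V] (τ : V → ℕ) (L : V → ℕ)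

lemma wdm_step (hL : IsWDMLayers G τ L) (hτ : ∀ v, 2 ≤ τ v) (v : V) (hv : 1 ≤ L v) (a : V) :
    ∃ u, G.Adj v u ∧ L u + 1 = L v ∧ u ≠ a := by
  have h1 : 1 < ((G.neighborFinset v).filter (fun u => L u + 1 = L v)).card :=
    lt_of_lt_of_le (by norm_num : (1:ℕ) < 2) (le_trans (hτ v) (hL v hv))
  obtain ⟨b, hb, hba⟩ := Finset.exists_mem_ne h1 a
  simp only [Finset.mem_filter, mem_neighborFinset] at hb
  exact ⟨b, hb.1, hb.2, hba⟩

lemma wdm_descend (hL : IsWDMLayers G τ L) (hτ : ∀ v, 2 ≤ τ v) (A : ℕ → V) :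
    ∀ (k : ℕ) (v : V), L v = k → ∃ f : ℕ → V, f k = v ∧ (∀ j ≤ k, L (f j) = j) ∧
      (∀ j < k, G.Adj (f (j+1)) (f j)) ∧ (∀ j < k, f j ≠ A j) := by
  intro k
  induction k with
  | zero =>
    intro v hv
    exact ⟨fun _ => v, rfl, by simpa using hv, by omega, by omega⟩
  | succ k ih =>
    intro v hv
    obtain ⟨u, hadj, hu, hua⟩ := wdm_step G τ L hL hτ v (by omega) (A k)
    have hu' : L u = k := by omega
    obtain ⟨f₀, hf0, hfL, hfadj, hfA⟩ := ih u hu'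
    refine ⟨fun j => if j = k + 1 then v else f₀ j, by simp, ?_, ?_, ?_⟩
    · intro j hj
      by_cases h : j = k + 1
      · simp [h, hv]
      · simp only [if_neg h]; exact hfL j (by omega)
    · intro j hj
      by_cases h : j = k
      · subst h
        simp only [if_pos rfl, if_neg (by omega : ¬ j = j + 1), hf0]
        exact hadj
      · simp only [if_neg (by omega : ¬ j + 1 = k + 1), if_neg (by omega : ¬ j = k + 1)]
        exact hfadj j (by omega)
    · intro j hj
      by_cases h : j = k
      · subst h; simpa [if_neg (by omega : ¬ j = j + 1), hf0] using hua
      · simp only [if_neg (by omega : ¬ j = k + 1)]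
        exact hfA j (by omega)

lemma wdm_chainWalk (f : ℕ → V) :
    ∀ (k : ℕ), (∀ j < k, G.Adj (f (j+1)) (f j)) →
    ∃ p : G.Walk (f k) (f 0), p.length = k ∧ p.support = (List.range (k+1)).reverse.map f := by
  intro k
  induction k with
  | zero => exact fun _ => ⟨SimpleGraph.Walk.nil, rfl, by simp [List.range_succ]⟩
  | succ k ih =>
    intro hadj
    obtain ⟨p, hlen, hsup⟩ := ih (fun j hj => hadj j (by omega))
    refine ⟨SimpleGraph.Walk.cons (hadj k (by omega)) p, by simp [hlen], ?_⟩
    rw [SimpleGraph.Walk.support_cons, hsup]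
    simp [List.range_succ]

end Aux

theorem wdm_main {V : Type*} (G : SimpleGraph V) [Fintype V]
    (τ : V → ℕ) (t l : ℕ) (hτ : ∀ v, 2 ≤ τ v)
    (hmax : ∀ (u v : V) (p : G.Walk u v), p.IsPath → p.length ≤ l)
    (L : V → ℕ) (hL : IsWDMLayers G τ L) (ht : ∀ v, L v ≤ t)
    (hproc : ∃ w, L w = t) :
    (t : ℝ) ≤ l / 2 := by
  obtain ⟨w, hw⟩ := hproc
  rcases t with _ | s
  · simp only [Nat.cast_zero]; positivity
  -- two distinct neighbors of w in layer s
  have h2 : 1 < ((G.neighborFinset w).filter (fun u => L u + 1 = L w)).card :=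
    lt_of_lt_of_le (by norm_num) (le_trans (hτ w) (hL w (by omega)))
  obtain ⟨u₁, hu₁, u₂, hu₂, hne⟩ := Finset.one_lt_card.mp h2
  simp only [Finset.mem_filter, mem_neighborFinset, hw] at hu₁ hu₂
  have hLu₁ : L u₁ = s := by omega
  have hLu₂ : L u₂ = s := by omega
  obtain ⟨f, hfe, hfL, hfadj, -⟩ := wdm_descend G τ L hL hτ (fun _ => w) s u₁ hLu₁
  obtain ⟨g, hge, hgL, hgadj, hgf⟩ := wdm_descend G τ L hL hτ f s u₂ hLu₂
  have hgf' : ∀ j ≤ s, g j ≠ f j := by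
    intro j hj
    rcases lt_or_eq_of_le hj with h | h
    · exact hgf j h
    · subst h; rw [hge, hfe]; exact hne.symm
  obtain ⟨pf, hpfl, hpfs⟩ := wdm_chainWalk G f s hfadj
  obtain ⟨pg, hpgl, hpgs⟩ := wdm_chainWalk G g s hgadj
  have aw1 : G.Adj w (f s) := hfe ▸ hu₁.1
  have aw2 : G.Adj (g s) w := (hge ▸ hu₂.1).symm
  set P : G.Walk (g 0) (f 0) :=
    pg.reverse.append (SimpleGraph.Walk.cons aw2 (SimpleGraph.Walk.cons aw1 pf)) with hP
  have hlen : P.length = 2 * (s + 1) := by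
    simp [hP, SimpleGraph.Walk.length_append, SimpleGraph.Walk.length_reverse, hpfl, hpgl]
    omega
  have hsup : P.support = (List.range (s+1)).map g ++ w :: (List.range (s+1)).reverse.map f := by
    rw [hP, SimpleGraph.Walk.support_append, SimpleGraph.Walk.support_reverse, hpgs,
      SimpleGraph.Walk.support_cons, SimpleGraph.Walk.support_cons, hpfs]
    simp
  have hfinj : ((List.range (s+1)).reverse.map f).Nodup := by
    refine List.Nodup.map_on ?_ (by simpa using List.nodup_range (n := s+1))
    intro x hx y hy hxy
    simp only [List.mem_reverse, List.mem_range] at hx hy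
    have := hfL x (by omega); have := hfL y (by omega)
    have : L (f x) = L (f y) := by rw [hxy]
    omega
  have hginj : ((List.range (s+1)).map g).Nodup := by
    refine List.Nodup.map_on ?_ (List.nodup_range (n := _))
    intro x hx y hy hxy
    rw [List.mem_range] at hx hy
    have := hgL x (by omega); have := hgL y (by omega)
    have : L (g x) = L (g y) := by rw [hxy]
    omega
  have hwf : w ∉ (List.range (s+1)).reverse.map f := by
    intro hmem
    obtain ⟨j, hj, hje⟩ := List.mem_map.mp hmem
    simp only [List.mem_reverse, List.mem_range] at hj
    have := hfL j (by omega)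
    rw [hje] at this
    omega
  have hpath : P.IsPath := by
    rw [SimpleGraph.Walk.isPath_def, hsup, List.nodup_append]
    refine ⟨hginj, List.nodup_cons.mpr ⟨hwf, hfinj⟩, ?_⟩
    intro a ha b hb hab
    subst hab
    obtain ⟨j, hj, hje⟩ := List.mem_map.mp ha
    simp only [List.mem_range] at hj
    rcases List.mem_cons.mp hb with h | h
    · have := hgL j (by omega)
      rw [hje, h] at this
      omega
    · obtain ⟨i, hi, hie⟩ := List.mem_map.mp h
      simp only [List.mem_reverse, List.mem_range] at hi
      subst hje
      rcases eq_or_ne i j with rfl | hij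
      · exact hgf' i (by omega) hie.symm
      · have h1 := hgL j (by omega)
        have h2 := hfL i (by omega)
        rw [hie] at h2
        omega
  have hle := hmax _ _ P hpath
  rw [hlen] at hle
  have : ((2 : ℝ) * (s + 1)) ≤ l := by exact_mod_cast hle
  push_cast
  linarith

/-- If all thresholds are at least 2 and `l` is the length of a longest path of
`G`, then the processing time `t` of any weak dynamic monopoly satisfies
`t ≤ l/2`. -/
theorem wdm_processing_time_le_longest_path {V : Type*} (G : SimpleGraph V) [Fintype V]
    (τ : V → ℕ) (t l : ℕ) (hτ : ∀ v, 2 ≤ τ v)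
    (hl : ∃ (u v : V) (p : G.Walk u v), p.IsPath ∧ p.length = l)
    (hmax : ∀ (u v : V) (p : G.Walk u v), p.IsPath → p.length ≤ l)
    (L : V → ℕ) (hL : IsWDMLayers G τ L) (ht : ∀ v, L v ≤ t)
    (hproc : ∃ w, L w = t) :
    (t : ℝ) ≤ l / 2 :=
  wdm_main G τ t l hτ hmax L hL ht hproc
end

section
/- Let G be a graph on n vertices with Δ(G) ≤ k, τ any threshold assignment, and D any τ-weak dynamic monopoly with processing time t. Then n ≤ k^{t+1} |D|. -/
open SimpleGraph Finset
open scoped Classical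

/-- In a graph on `n` vertices with maximum degree at most `k`, any weak dynamic
monopoly `D` with processing time `t` satisfies `n ≤ k^(t+1) |D|`. -/
theorem wdm_size_max_degree {V : Type*} (G : SimpleGraph V) [Fintype V]
    (τ : V → ℕ) (k t : ℕ) (hk : 2 ≤ k)
    (hdeg : ∀ v, G.degree v ≤ k) (hτ : ∀ v, 1 ≤ τ v)
    (L : V → ℕ) (hL : IsWDMLayers G τ L) (ht : ∀ v, L v ≤ t) :
    Fintype.card V ≤ k ^ (t + 1) * (Finset.univ.filter (fun v => L v = 0)).card := by
  set layer : ℕ → Finset V := fun i => Finset.univ.filter (fun v => L v = i) with hlayer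
  -- step: |layer (i+1)| ≤ k * |layer i|
  have step : ∀ i, (layer (i + 1)).card ≤ k * (layer i).card := by
    intro i
    have h1 : (layer (i + 1)).card ≤
        ∑ v ∈ layer (i + 1), ((layer i).filter (fun u => G.Adj v u)).card := by
      rw [Finset.card_eq_sum_ones (layer (i + 1))]
      apply Finset.sum_le_sum
      intro v hv
      have hv' : L v = i + 1 := (Finset.mem_filter.mp hv).2
      have := hL v (by omega)
      have hsub : (G.neighborFinset v).filter (fun u => L u + 1 = L v) ⊆
          (layer i).filter (fun u => G.Adj v u) := by
        intro u hu
        simp only [hlayer, Finset.mem_filter, Finset.mem_univ, true_and, SimpleGraph.mem_neighborFinset] at hu ⊢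
        exact ⟨by omega, hu.1⟩
      calc 1 ≤ τ v := hτ v
        _ ≤ _ := this
        _ ≤ _ := Finset.card_le_card hsub
    have h2 : ∑ v ∈ layer (i + 1), ((layer i).filter (fun u => G.Adj v u)).card =
        ∑ u ∈ layer i, ((layer (i + 1)).filter (fun v => G.Adj u v)).card := by
      simp only [Finset.card_filter]
      rw [Finset.sum_comm]
      congr 1
      ext u
      congr 1
      ext v
      simp [G.adj_comm u v]
    have h3 : ∑ u ∈ layer i, ((layer (i + 1)).filter (fun v => G.Adj u v)).card ≤
        k * (layer i).card := by
      rw [mul_comm, Finset.card_eq_sum_ones (layer i), Finset.sum_mul]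
      apply Finset.sum_le_sum
      intro u hu
      have : ((layer (i + 1)).filter (fun v => G.Adj u v)).card ≤ G.degree u := by
        rw [← SimpleGraph.card_neighborFinset_eq_degree]
        apply Finset.card_le_card
        intro v hv
        simp only [Finset.mem_filter, SimpleGraph.mem_neighborFinset] at hv ⊢
        exact hv.2
      simpa using this.trans (hdeg u)
    omega
  have bound : ∀ i, (layer i).card ≤ k ^ i * (layer 0).card := by
    intro i
    induction i with
    | zero => simp
    | succ n ih =>
      calc (layer (n + 1)).card ≤ k * (layer n).card := step n
        _ ≤ k * (k ^ n * (layer 0).card) := Nat.mul_le_mul_left k ih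
        _ = k ^ (n + 1) * (layer 0).card := by ring
  have hcard : Fintype.card V = ∑ i ∈ Finset.range (t + 1), (layer i).card := by
    rw [← Finset.card_univ]
    exact Finset.card_eq_sum_card_fiberwise (fun v _ =>
      Finset.mem_range.mpr (Nat.lt_succ_of_le (ht v)))
  have geo : ∑ i ∈ Finset.range (t + 1), k ^ i ≤ k ^ (t + 1) := by
    induction t + 1 with
    | zero => simp
    | succ n ih =>
      rw [Finset.sum_range_succ, pow_succ]
      have : k ^ n * 2 ≤ k ^ n * k := Nat.mul_le_mul_left _ hk
      omega
  calc Fintype.card V = ∑ i ∈ Finset.range (t + 1), (layer i).card := hcard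
    _ ≤ ∑ i ∈ Finset.range (t + 1), k ^ i * (layer 0).card :=
        Finset.sum_le_sum fun i _ => bound i
    _ = (∑ i ∈ Finset.range (t + 1), k ^ i) * (layer 0).card := by
        rw [Finset.sum_mul]
    _ ≤ k ^ (t + 1) * (layer 0).card := Nat.mul_le_mul_right _ geo
end

section
/- Let G = C_n □ C_m (Cartesian product of cycles, n,m ≥ 3) with constant threshold 3 on every vertex. Then every weak dynamic monopoly of G has processing time at most 2. -/
open SimpleGraph Finset
open scoped Classical

/- ### Auxiliary lemmas -/

lemma fin_one_ne_zero' (k : ℕ) : (1 : Fin (k+2)) ≠ 0 := by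
  simp [Fin.ext_iff]

lemma fin_two_ne_zero' {k : ℕ} (hk : 1 ≤ k) : (1 + 1 : Fin (k+2)) ≠ 0 := by
  have : ((1 + 1 : Fin (k+2)) : ℕ) = 2 := by
    rw [Fin.val_add, Fin.val_one, Nat.mod_eq_of_lt (by omega)]
  intro h; rw [h] at this; simp at this

lemma sub_one_ne_add_one {k : ℕ} (hk : 1 ≤ k) (a : Fin (k+2)) : a - 1 ≠ a + 1 := by
  intro h
  have : a = a + (1 + 1) := by rw [← add_assoc, ← h, sub_add_cancel]
  exact fin_two_ne_zero' hk (left_eq_add.mp this)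

lemma sub_one_ne_self {k : ℕ} (a : Fin (k+2)) : a - 1 ≠ a := fun h =>
  fin_one_ne_zero' k (sub_eq_self.mp h)

lemma add_one_ne_self {k : ℕ} (a : Fin (k+2)) : a + 1 ≠ a := fun h =>
  fin_one_ne_zero' k (add_eq_left.mp h)

lemma cyc_adj (k : ℕ) (u v : Fin (k+2)) :
    (cycleGraph (k+2)).Adj u v ↔ v = u - 1 ∨ v = u + 1 := by
  rw [cycleGraph_adj]
  constructor
  · rintro (h | h)
    · exact .inl (eq_sub_iff_add_eq.mpr ((add_comm v 1).trans (sub_eq_iff_eq_add.mp h).symm))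
    · exact .inr ((eq_add_of_sub_eq h).trans (add_comm _ _))
  · rintro (rfl | rfl)
    · left; exact sub_sub_cancel u 1
    · right; exact add_sub_cancel_left u 1

/-- The four potential neighbors of a vertex of the torus. -/
def nbhd {k l : ℕ} (a : Fin (k+2)) (b : Fin (l+2)) : Finset (Fin (k+2) × Fin (l+2)) :=
  {(a-1,b),(a+1,b),(a,b-1),(a,b+1)}

lemma nbr_mem {k l : ℕ} {a x : Fin (k+2)} {b y : Fin (l+2)}
    (h : ((cycleGraph (k+2)).boxProd (cycleGraph (l+2))).Adj (a,b) (x,y)) :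
    (x,y) ∈ nbhd a b := by
  rw [boxProd_adj] at h
  simp only [cyc_adj] at h
  simp only [nbhd, mem_insert, mem_singleton, Prod.mk.injEq]
  tauto

lemma card4 {k l : ℕ} (hk : 1 ≤ k) (hl : 1 ≤ l) (a : Fin (k+2)) (b : Fin (l+2)) :
    (nbhd a b).card = 4 := by
  rw [nbhd, card_insert_of_notMem, card_insert_of_notMem, card_insert_of_notMem,
    card_singleton]
  · simp [Prod.ext_iff, sub_one_ne_add_one hl b]
  · simp [Prod.ext_iff, add_one_ne_self a]
  · simp [Prod.ext_iff, sub_one_ne_add_one hk a, sub_one_ne_self a]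

lemma count_le {α : Type*} [DecidableEq α] {F s : Finset α} (hF : F ⊆ s) (hs : s.card = 4)
    {p q : α} (hp : p ∈ s) (hq : q ∈ s) (hpq : p ≠ q) (hpF : p ∉ F) (hqF : q ∉ F) :
    F.card ≤ 2 := by
  have h1 : F ⊆ s \ {p, q} := by
    intro x hx
    rw [mem_sdiff]
    refine ⟨hF hx, ?_⟩
    simp only [mem_insert, mem_singleton]
    rintro (rfl | rfl) <;> contradiction
  have h2 : (s \ {p, q}).card = 4 - 2 := by
    rw [card_sdiff_of_subset (by simp [insert_subset_iff, hp, hq]), hs,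
      card_insert_of_notMem (by simp [hpq]), card_singleton]
  have := card_le_card h1
  omega

/-- Among any two distinct elements of a 4-element set containing a subset of
size at least 3 all of whose elements satisfy `P`, at least one satisfies `P`. -/
lemma two_of_four {α : Type*} [DecidableEq α] {F s : Finset α} {P : α → Prop}
    (hF : ∀ x ∈ F, x ∈ s ∧ P x) (hs : s.card = 4) (hcard : 3 ≤ F.card)
    {p q : α} (hp : p ∈ s) (hq : q ∈ s) (hpq : p ≠ q) : P p ∨ P q := by
  by_contra h
  push_neg at h
  have := count_le (fun x hx => (hF x hx).1) hs hp hq hpq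
    (fun hx => h.1 (hF _ hx).2) (fun hx => h.2 (hF _ hx).2)
  omega

/-- Abstract form of the layer condition for the torus. -/
def Key {n' m' : ℕ} (L : Fin (n'+2) × Fin (m'+2) → ℕ) : Prop :=
  ∀ v : Fin (n'+2) × Fin (m'+2), 1 ≤ L v →
    ∃ F : Finset (Fin (n'+2) × Fin (m'+2)), 3 ≤ F.card ∧
      ∀ x ∈ F, x ∈ nbhd v.1 v.2 ∧ L x + 1 = L v

lemma key_of_hL {n' m' : ℕ} (L : Fin (n'+2) × Fin (m'+2) → ℕ)
    (hL : IsWDMLayers ((cycleGraph (n'+2)).boxProd (cycleGraph (m'+2))) (fun _ => 3) L) :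
    Key L := by
  intro v hv
  refine ⟨_, hL v hv, ?_⟩
  intro x hx
  rw [Finset.mem_filter, SimpleGraph.mem_neighborFinset] at hx
  refine ⟨?_, hx.2⟩
  have h2 := hx.1
  obtain ⟨a, b⟩ := v
  obtain ⟨x1, x2⟩ := x
  exact nbr_mem h2

/-- A vertex in layer 3 forces a contradiction at a suitable corner. -/
lemma corner {n' m' : ℕ} (hn' : 1 ≤ n') (hm' : 1 ≤ m')
    (L : Fin (n'+2) × Fin (m'+2) → ℕ) (hK : Key L)
    {a c : Fin (n'+2)} {b d : Fin (m'+2)}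
    (hc : c = a - 1 ∨ c = a + 1) (hd : d = b - 1 ∨ d = b + 1)
    (h3 : L (a,b) = 3) (hc2 : L (c,b) = 2) (hd2 : L (a,d) = 2) : False := by
  have hca : c ≠ a := by
    rcases hc with rfl | rfl
    exacts [sub_one_ne_self a, add_one_ne_self a]
  have hac : a = c - 1 ∨ a = c + 1 := by
    rcases hc with rfl | rfl
    · exact .inr (sub_add_cancel a 1).symm
    · exact .inl (add_sub_cancel_right a 1).symm
  have hbd : b = d - 1 ∨ b = d + 1 := by
    rcases hd with rfl | rfl
    · exact .inr (sub_add_cancel b 1).symm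
    · exact .inl (add_sub_cancel_right b 1).symm
  -- Step 1: the corner `(c,d)` lies in layer 1.
  obtain ⟨F1, hF1card, hF1mem⟩ := hK (c, b) (by omega)
  rw [hc2] at hF1mem
  have hm_ab : ((a : Fin (n'+2)), b) ∈ nbhd c b := by
    rcases hac with rfl | rfl <;> simp [nbhd]
  have hm_cd : ((c : Fin (n'+2)), d) ∈ nbhd c b := by
    rcases hd with rfl | rfl <;> simp [nbhd]
  have hne1 : ((a : Fin (n'+2)), b) ≠ (c, d) := fun h => hca (congrArg Prod.fst h).symm
  have hLcd : L (c, d) = 1 := by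
    rcases two_of_four hF1mem (card4 hn' hm' c b) hF1card hm_ab hm_cd hne1 with h | h
    · rw [h3] at h; omega
    · omega
  -- Step 2: contradiction at the corner.
  obtain ⟨F2, hF2card, hF2mem⟩ := hK (c, d) (by omega)
  rw [hLcd] at hF2mem
  have hm_ad : ((a : Fin (n'+2)), d) ∈ nbhd c d := by
    rcases hac with rfl | rfl <;> simp [nbhd]
  have hm_cb : ((c : Fin (n'+2)), b) ∈ nbhd c d := by
    rcases hbd with rfl | rfl <;> simp [nbhd]
  have hne2 : ((a : Fin (n'+2)), d) ≠ (c, b) := fun h => hca (congrArg Prod.fst h).symm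
  rcases two_of_four hF2mem (card4 hn' hm' c d) hF2card hm_ad hm_cb hne2 with h | h
  · rw [hd2] at h; omega
  · rw [hc2] at h; omega

/-- In the Cartesian product of cycles `C_n □ C_m` with constant threshold 3,
every weak dynamic monopoly has processing time at most 2: every vertex lies in
layer 0, 1 or 2. -/
theorem wdm_torus_processing_time_le_two (n m : ℕ) (hn : 3 ≤ n) (hm : 3 ≤ m)
    (L : Fin n × Fin m → ℕ)
    (hL : IsWDMLayers ((SimpleGraph.cycleGraph n).boxProd (SimpleGraph.cycleGraph m))
      (fun _ => 3) L) :
    ∀ v, L v ≤ 2 := by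
  obtain ⟨n', rfl⟩ : ∃ n', n = n' + 2 := ⟨n - 2, by omega⟩
  obtain ⟨m', rfl⟩ : ∃ m', m = m' + 2 := ⟨m - 2, by omega⟩
  have hn' : 1 ≤ n' := by omega
  have hm' : 1 ≤ m' := by omega
  have hK : Key L := key_of_hL L hL
  intro v
  by_contra hv
  push_neg at hv
  have hex : ∃ k, ∃ w : Fin (n'+2) × Fin (m'+2), L w = k + 3 := ⟨L v - 3, v, by omega⟩
  obtain ⟨w, hw⟩ := Nat.find_spec hex
  by_cases hk : Nat.find hex = 0
  · -- There is a vertex in layer 3; derive a contradiction.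
    rw [hk] at hw
    obtain ⟨a, b⟩ := w
    have hw3 : L (a, b) = 3 := by omega
    obtain ⟨F, hFcard, hFmem⟩ := hK (a, b) (by omega)
    rw [hw3] at hFmem
    obtain ⟨c, hc, hc2⟩ : ∃ c, (c = a - 1 ∨ c = a + 1) ∧ L (c, b) = 2 := by
      have := two_of_four hFmem (card4 hn' hm' a b) hFcard
        (p := (a-1, b)) (q := (a+1, b)) (by simp [nbhd]) (by simp [nbhd])
        (by simp [Prod.ext_iff, sub_one_ne_add_one hn' a])
      rcases this with h | h
      · exact ⟨a - 1, .inl rfl, by omega⟩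
      · exact ⟨a + 1, .inr rfl, by omega⟩
    obtain ⟨d, hd, hd2⟩ : ∃ d, (d = b - 1 ∨ d = b + 1) ∧ L (a, d) = 2 := by
      have := two_of_four hFmem (card4 hn' hm' a b) hFcard
        (p := (a, b-1)) (q := (a, b+1)) (by simp [nbhd]) (by simp [nbhd])
        (by simp [Prod.ext_iff, sub_one_ne_add_one hm' b])
      rcases this with h | h
      · exact ⟨b - 1, .inl rfl, by omega⟩
      · exact ⟨b + 1, .inr rfl, by omega⟩
    exact corner hn' hm' L hK hc hd hw3 hc2 hd2
  · -- Minimality: a vertex in layer `k+3` with `k > 0` has a neighbor in layer `(k-1)+3`.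
    have h1 : 1 ≤ L w := by omega
    obtain ⟨F, hFcard, hFmem⟩ := hK w h1
    have h3 : 0 < F.card := by omega
    obtain ⟨u, hu⟩ := card_pos.mp h3
    have hu2 := (hFmem u hu).2
    exact Nat.find_min hex (m := Nat.find hex - 1) (by omega) ⟨u, by omega⟩
end

section
/- For n divisible by 4, the graph C_n □ C_n with constant threshold 3 has a weak dynamic monopoly of size 3n²/8; hence wdyn(C_n □ C_n) ≤ 3n²/8. -/
open SimpleGraph Finset
open scoped Classical

namespace WDMTorus

def pat : ℕ → ℕ → ℕ
  | 0, 0 => 0 | 0, 1 => 1 | 0, 2 => 2 | 0, 3 => 1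
  | 1, 0 => 1 | 1, 1 => 0 | 1, 2 => 1 | 1, 3 => 0
  | 2, 0 => 2 | 2, 1 => 1 | 2, 2 => 0 | 2, 3 => 1
  | 3, 0 => 1 | 3, 1 => 0 | 3, 2 => 1 | 3, 3 => 0
  | _, _ => 0

def Lfun (n : ℕ) (v : Fin n × Fin n) : ℕ := pat (v.1.val % 4) (v.2.val % 4)

variable {n : ℕ} [NeZero n]

lemma val_add_one (hn : 3 ≤ n) (x : Fin n) : (x + 1).val = (x.val + 1) % n := by
  rw [Fin.add_def, Fin.val_one', Nat.mod_eq_of_lt (by omega : 1 < n)]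

lemma val_sub_one (hn : 3 ≤ n) (x : Fin n) : (x - 1).val = (x.val + (n - 1)) % n := by
  rw [Fin.sub_def, Fin.val_one', Nat.mod_eq_of_lt (by omega : 1 < n)]
  simp [Nat.add_comm]

lemma add_mod4 (hn : 3 ≤ n) (h4 : 4 ∣ n) (x : Fin n) :
    (x + 1).val % 4 = (x.val + 1) % 4 := by
  rw [val_add_one hn, Nat.mod_mod_of_dvd _ h4]

lemma sub_mod4 (hn : 3 ≤ n) (h4 : 4 ∣ n) (x : Fin n) :
    (x - 1).val % 4 = (x.val + 3) % 4 := by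
  rw [val_sub_one hn, Nat.mod_mod_of_dvd _ h4]
  omega

lemma adj_add (hn : 3 ≤ n) (x : Fin n) : (cycleGraph n).Adj x (x + 1) := by
  rw [cycleGraph_adj']
  right
  rw [add_sub_cancel_left, Fin.val_one', Nat.mod_eq_of_lt (by omega : 1 < n)]

lemma adj_sub (hn : 3 ≤ n) (x : Fin n) : (cycleGraph n).Adj x (x - 1) := by
  rw [cycleGraph_adj']
  left
  rw [sub_sub_cancel, Fin.val_one', Nat.mod_eq_of_lt (by omega : 1 < n)]

lemma three_le_card {V : Type*} {s : Finset V} {p : V → Prop} [DecidablePred p]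
    {a b c : V} (hab : a ≠ b) (hac : a ≠ c) (hbc : b ≠ c)
    (ha : a ∈ s) (hb : b ∈ s) (hc : c ∈ s) (pa : p a) (pb : p b) (pc : p c) :
    3 ≤ (s.filter p).card := by
  have hsub : ({a, b, c} : Finset V) ⊆ s.filter p := by
    intro z hz
    simp only [mem_insert, mem_singleton] at hz
    rcases hz with rfl | rfl | rfl <;> simp [mem_filter, ha, hb, hc, pa, pb, pc]
  calc 3 = ({a, b, c} : Finset V).card := by
            rw [card_insert_of_notMem (by simp [hab, hac]),
              card_insert_of_notMem (by simp [hbc]), card_singleton]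
       _ ≤ _ := card_le_card hsub

lemma modcount (n k b : ℕ) (hk : 0 < k) (hd : k ∣ n) (hb : b < k) :
    ((univ : Finset (Fin n)).filter (fun y => y.val % k = b)).card = n / k := by
  obtain ⟨m, rfl⟩ := hd
  have key : ((univ : Finset (Fin (k * m))).filter (fun y => y.val % k = b)).card
      = (Finset.range m).card := by
    apply Finset.card_bij (fun y _ => y.val / k)
    · intro y hy
      have : y.val < k * m := y.isLt
      rw [Finset.mem_range, Nat.div_lt_iff_lt_mul hk, Nat.mul_comm m k]
      exact this
    · intro y hy y' hy' h
      simp only [mem_filter] at hy hy'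
      have e1 := Nat.div_add_mod y.val k
      have e2 := Nat.div_add_mod y'.val k
      apply Fin.ext
      rw [hy.2] at e1
      rw [hy'.2] at e2
      rw [h] at e1
      omega
    · intro j hj
      rw [Finset.mem_range] at hj
      have hlt : k * j + b < k * m := by
        have h1 : k * (j + 1) ≤ k * m := Nat.mul_le_mul_left k (by omega)
        rw [Nat.mul_succ] at h1
        omega
      refine ⟨⟨k * j + b, hlt⟩, ?_, ?_⟩
      · simp [mem_filter, Nat.mul_add_mod, Nat.mod_eq_of_lt hb]
      · simp [Nat.mul_add_div hk, Nat.div_eq_of_lt hb]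
  rw [key, Finset.card_range, Nat.mul_div_cancel_left _ hk]


lemma layers (n : ℕ) (hn : 3 ≤ n) (h4 : 4 ∣ n) :
    IsWDMLayers ((cycleGraph n).boxProd (cycleGraph n)) (fun _ => 3) (Lfun n) := by
  haveI : NeZero n := ⟨by omega⟩
  rintro ⟨x, y⟩ hv
  have sR : (x + 1).val % 4 = (x.val + 1) % 4 := add_mod4 hn h4 x
  have sL : (x - 1).val % 4 = (x.val + 3) % 4 := sub_mod4 hn h4 x
  have sU : (y + 1).val % 4 = (y.val + 1) % 4 := add_mod4 hn h4 y
  have sD : (y - 1).val % 4 = (y.val + 3) % 4 := sub_mod4 hn h4 y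
  have aR : ((cycleGraph n).boxProd (cycleGraph n)).Adj (x, y) (x + 1, y) :=
    SimpleGraph.boxProd_adj.mpr (Or.inl ⟨adj_add hn x, rfl⟩)
  have aL : ((cycleGraph n).boxProd (cycleGraph n)).Adj (x, y) (x - 1, y) :=
    SimpleGraph.boxProd_adj.mpr (Or.inl ⟨adj_sub hn x, rfl⟩)
  have aU : ((cycleGraph n).boxProd (cycleGraph n)).Adj (x, y) (x, y + 1) :=
    SimpleGraph.boxProd_adj.mpr (Or.inr ⟨adj_add hn y, rfl⟩)
  have aD : ((cycleGraph n).boxProd (cycleGraph n)).Adj (x, y) (x, y - 1) :=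
    SimpleGraph.boxProd_adj.mpr (Or.inr ⟨adj_sub hn y, rfl⟩)
  have nRL : ((x + 1, y) : Fin n × Fin n) ≠ (x - 1, y) := by
    intro h
    have h1 := congrArg (fun p : Fin n × Fin n => p.1.val % 4) h
    simp only at h1
    rw [sR, sL] at h1
    omega
  have nRU : ((x + 1, y) : Fin n × Fin n) ≠ (x, y + 1) := by
    intro h
    have h1 := congrArg (fun p : Fin n × Fin n => p.1.val % 4) h
    simp only at h1
    rw [sR] at h1
    omega
  have nRD : ((x + 1, y) : Fin n × Fin n) ≠ (x, y - 1) := by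
    intro h
    have h1 := congrArg (fun p : Fin n × Fin n => p.1.val % 4) h
    simp only at h1
    rw [sR] at h1
    omega
  have nLU : ((x - 1, y) : Fin n × Fin n) ≠ (x, y + 1) := by
    intro h
    have h1 := congrArg (fun p : Fin n × Fin n => p.1.val % 4) h
    simp only at h1
    rw [sL] at h1
    omega
  have nLD : ((x - 1, y) : Fin n × Fin n) ≠ (x, y - 1) := by
    intro h
    have h1 := congrArg (fun p : Fin n × Fin n => p.1.val % 4) h
    simp only at h1
    rw [sL] at h1
    omega
  have nUD : ((x, y + 1) : Fin n × Fin n) ≠ (x, y - 1) := by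
    intro h
    have h1 := congrArg (fun p : Fin n × Fin n => p.2.val % 4) h
    simp only at h1
    rw [sU, sD] at h1
    omega
  have hL : Lfun n (x, y) = pat (x.val % 4) (y.val % 4) := rfl
  have hx4 : x.val % 4 = 0 ∨ x.val % 4 = 1 ∨ x.val % 4 = 2 ∨ x.val % 4 = 3 := by omega
  have hy4 : y.val % 4 = 0 ∨ y.val % 4 = 1 ∨ y.val % 4 = 2 ∨ y.val % 4 = 3 := by omega
  rcases hx4 with ha | ha | ha | ha <;> rcases hy4 with hb | hb | hb | hb
  · rw [hL, ha, hb] at hv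
    exact absurd hv (by decide)
  · refine three_le_card nRL nRD nLD ?_ ?_ ?_ ?_ ?_ ?_
    · rw [SimpleGraph.mem_neighborFinset]
      exact aR
    · rw [SimpleGraph.mem_neighborFinset]
      exact aL
    · rw [SimpleGraph.mem_neighborFinset]
      exact aD
    · have e : (x.val + 1) % 4 = 1 := by omega
      show pat ((x + 1).val % 4) (y.val % 4) + 1 = pat (x.val % 4) (y.val % 4)
      rw [sR, e, ha, hb]
      decide
    · have e : (x.val + 3) % 4 = 3 := by omega
      show pat ((x - 1).val % 4) (y.val % 4) + 1 = pat (x.val % 4) (y.val % 4)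
      rw [sL, e, ha, hb]
      decide
    · have e : (y.val + 3) % 4 = 0 := by omega
      show pat (x.val % 4) ((y - 1).val % 4) + 1 = pat (x.val % 4) (y.val % 4)
      rw [sD, e, ha, hb]
      decide
  · refine three_le_card nRL nRU nLU ?_ ?_ ?_ ?_ ?_ ?_
    · rw [SimpleGraph.mem_neighborFinset]
      exact aR
    · rw [SimpleGraph.mem_neighborFinset]
      exact aL
    · rw [SimpleGraph.mem_neighborFinset]
      exact aU
    · have e : (x.val + 1) % 4 = 1 := by omega
      show pat ((x + 1).val % 4) (y.val % 4) + 1 = pat (x.val % 4) (y.val % 4)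
      rw [sR, e, ha, hb]
      decide
    · have e : (x.val + 3) % 4 = 3 := by omega
      show pat ((x - 1).val % 4) (y.val % 4) + 1 = pat (x.val % 4) (y.val % 4)
      rw [sL, e, ha, hb]
      decide
    · have e : (y.val + 1) % 4 = 3 := by omega
      show pat (x.val % 4) ((y + 1).val % 4) + 1 = pat (x.val % 4) (y.val % 4)
      rw [sU, e, ha, hb]
      decide
  · refine three_le_card nRL nRU nLU ?_ ?_ ?_ ?_ ?_ ?_
    · rw [SimpleGraph.mem_neighborFinset]
      exact aR
    · rw [SimpleGraph.mem_neighborFinset]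
      exact aL
    · rw [SimpleGraph.mem_neighborFinset]
      exact aU
    · have e : (x.val + 1) % 4 = 1 := by omega
      show pat ((x + 1).val % 4) (y.val % 4) + 1 = pat (x.val % 4) (y.val % 4)
      rw [sR, e, ha, hb]
      decide
    · have e : (x.val + 3) % 4 = 3 := by omega
      show pat ((x - 1).val % 4) (y.val % 4) + 1 = pat (x.val % 4) (y.val % 4)
      rw [sL, e, ha, hb]
      decide
    · have e : (y.val + 1) % 4 = 0 := by omega
      show pat (x.val % 4) ((y + 1).val % 4) + 1 = pat (x.val % 4) (y.val % 4)
      rw [sU, e, ha, hb]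
      decide
  · refine three_le_card nLU nLD nUD ?_ ?_ ?_ ?_ ?_ ?_
    · rw [SimpleGraph.mem_neighborFinset]
      exact aL
    · rw [SimpleGraph.mem_neighborFinset]
      exact aU
    · rw [SimpleGraph.mem_neighborFinset]
      exact aD
    · have e : (x.val + 3) % 4 = 0 := by omega
      show pat ((x - 1).val % 4) (y.val % 4) + 1 = pat (x.val % 4) (y.val % 4)
      rw [sL, e, ha, hb]
      decide
    · have e : (y.val + 1) % 4 = 1 := by omega
      show pat (x.val % 4) ((y + 1).val % 4) + 1 = pat (x.val % 4) (y.val % 4)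
      rw [sU, e, ha, hb]
      decide
    · have e : (y.val + 3) % 4 = 3 := by omega
      show pat (x.val % 4) ((y - 1).val % 4) + 1 = pat (x.val % 4) (y.val % 4)
      rw [sD, e, ha, hb]
      decide
  · rw [hL, ha, hb] at hv
    exact absurd hv (by decide)
  · refine three_le_card nRU nRD nUD ?_ ?_ ?_ ?_ ?_ ?_
    · rw [SimpleGraph.mem_neighborFinset]
      exact aR
    · rw [SimpleGraph.mem_neighborFinset]
      exact aU
    · rw [SimpleGraph.mem_neighborFinset]
      exact aD
    · have e : (x.val + 1) % 4 = 2 := by omega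
      show pat ((x + 1).val % 4) (y.val % 4) + 1 = pat (x.val % 4) (y.val % 4)
      rw [sR, e, ha, hb]
      decide
    · have e : (y.val + 1) % 4 = 3 := by omega
      show pat (x.val % 4) ((y + 1).val % 4) + 1 = pat (x.val % 4) (y.val % 4)
      rw [sU, e, ha, hb]
      decide
    · have e : (y.val + 3) % 4 = 1 := by omega
      show pat (x.val % 4) ((y - 1).val % 4) + 1 = pat (x.val % 4) (y.val % 4)
      rw [sD, e, ha, hb]
      decide
  · rw [hL, ha, hb] at hv
    exact absurd hv (by decide)
  · refine three_le_card nRL nRU nLU ?_ ?_ ?_ ?_ ?_ ?_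
    · rw [SimpleGraph.mem_neighborFinset]
      exact aR
    · rw [SimpleGraph.mem_neighborFinset]
      exact aL
    · rw [SimpleGraph.mem_neighborFinset]
      exact aU
    · have e : (x.val + 1) % 4 = 3 := by omega
      show pat ((x + 1).val % 4) (y.val % 4) + 1 = pat (x.val % 4) (y.val % 4)
      rw [sR, e, ha, hb]
      decide
    · have e : (x.val + 3) % 4 = 1 := by omega
      show pat ((x - 1).val % 4) (y.val % 4) + 1 = pat (x.val % 4) (y.val % 4)
      rw [sL, e, ha, hb]
      decide
    · have e : (y.val + 1) % 4 = 1 := by omega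
      show pat (x.val % 4) ((y + 1).val % 4) + 1 = pat (x.val % 4) (y.val % 4)
      rw [sU, e, ha, hb]
      decide
  · refine three_le_card nRL nRU nLU ?_ ?_ ?_ ?_ ?_ ?_
    · rw [SimpleGraph.mem_neighborFinset]
      exact aR
    · rw [SimpleGraph.mem_neighborFinset]
      exact aL
    · rw [SimpleGraph.mem_neighborFinset]
      exact aU
    · have e : (x.val + 1) % 4 = 3 := by omega
      show pat ((x + 1).val % 4) (y.val % 4) + 1 = pat (x.val % 4) (y.val % 4)
      rw [sR, e, ha, hb]
      decide
    · have e : (x.val + 3) % 4 = 1 := by omega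
      show pat ((x - 1).val % 4) (y.val % 4) + 1 = pat (x.val % 4) (y.val % 4)
      rw [sL, e, ha, hb]
      decide
    · have e : (y.val + 1) % 4 = 2 := by omega
      show pat (x.val % 4) ((y + 1).val % 4) + 1 = pat (x.val % 4) (y.val % 4)
      rw [sU, e, ha, hb]
      decide
  · rw [hL, ha, hb] at hv
    exact absurd hv (by decide)
  · refine three_le_card nRL nRD nLD ?_ ?_ ?_ ?_ ?_ ?_
    · rw [SimpleGraph.mem_neighborFinset]
      exact aR
    · rw [SimpleGraph.mem_neighborFinset]
      exact aL
    · rw [SimpleGraph.mem_neighborFinset]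
      exact aD
    · have e : (x.val + 1) % 4 = 3 := by omega
      show pat ((x + 1).val % 4) (y.val % 4) + 1 = pat (x.val % 4) (y.val % 4)
      rw [sR, e, ha, hb]
      decide
    · have e : (x.val + 3) % 4 = 1 := by omega
      show pat ((x - 1).val % 4) (y.val % 4) + 1 = pat (x.val % 4) (y.val % 4)
      rw [sL, e, ha, hb]
      decide
    · have e : (y.val + 3) % 4 = 2 := by omega
      show pat (x.val % 4) ((y - 1).val % 4) + 1 = pat (x.val % 4) (y.val % 4)
      rw [sD, e, ha, hb]
      decide
  · refine three_le_card nRU nRD nUD ?_ ?_ ?_ ?_ ?_ ?_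
    · rw [SimpleGraph.mem_neighborFinset]
      exact aR
    · rw [SimpleGraph.mem_neighborFinset]
      exact aU
    · rw [SimpleGraph.mem_neighborFinset]
      exact aD
    · have e : (x.val + 1) % 4 = 0 := by omega
      show pat ((x + 1).val % 4) (y.val % 4) + 1 = pat (x.val % 4) (y.val % 4)
      rw [sR, e, ha, hb]
      decide
    · have e : (y.val + 1) % 4 = 1 := by omega
      show pat (x.val % 4) ((y + 1).val % 4) + 1 = pat (x.val % 4) (y.val % 4)
      rw [sU, e, ha, hb]
      decide
    · have e : (y.val + 3) % 4 = 3 := by omega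
      show pat (x.val % 4) ((y - 1).val % 4) + 1 = pat (x.val % 4) (y.val % 4)
      rw [sD, e, ha, hb]
      decide
  · rw [hL, ha, hb] at hv
    exact absurd hv (by decide)
  · refine three_le_card nLU nLD nUD ?_ ?_ ?_ ?_ ?_ ?_
    · rw [SimpleGraph.mem_neighborFinset]
      exact aL
    · rw [SimpleGraph.mem_neighborFinset]
      exact aU
    · rw [SimpleGraph.mem_neighborFinset]
      exact aD
    · have e : (x.val + 3) % 4 = 2 := by omega
      show pat ((x - 1).val % 4) (y.val % 4) + 1 = pat (x.val % 4) (y.val % 4)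
      rw [sL, e, ha, hb]
      decide
    · have e : (y.val + 1) % 4 = 3 := by omega
      show pat (x.val % 4) ((y + 1).val % 4) + 1 = pat (x.val % 4) (y.val % 4)
      rw [sU, e, ha, hb]
      decide
    · have e : (y.val + 3) % 4 = 1 := by omega
      show pat (x.val % 4) ((y - 1).val % 4) + 1 = pat (x.val % 4) (y.val % 4)
      rw [sD, e, ha, hb]
      decide
  · rw [hL, ha, hb] at hv
    exact absurd hv (by decide)

lemma fiber_card (n a b : ℕ) (hab : pat a b = 0) :
    (((univ : Finset (Fin n × Fin n)).filter (fun v => Lfun n v = 0)).filter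
      (fun v => (v.1.val % 4, v.2.val % 4) = (a, b))).card =
    ((univ : Finset (Fin n)).filter (fun x => x.val % 4 = a)).card *
    ((univ : Finset (Fin n)).filter (fun y => y.val % 4 = b)).card := by
  rw [filter_filter]
  have key : (univ : Finset (Fin n × Fin n)).filter
        (fun v => Lfun n v = 0 ∧ (v.1.val % 4, v.2.val % 4) = (a, b))
      = (univ ×ˢ univ).filter (fun v => v.1.val % 4 = a ∧ v.2.val % 4 = b) := by
    rw [Finset.univ_product_univ]
    apply filter_congr
    intro v _
    simp only [Prod.mk.injEq]
    constructor
    · rintro ⟨-, h1, h2⟩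
      exact ⟨h1, h2⟩
    · rintro ⟨h1, h2⟩
      refine ⟨?_, h1, h2⟩
      show pat (v.1.val % 4) (v.2.val % 4) = 0
      rw [h1, h2, hab]
  rw [key, filter_product (fun x : Fin n => x.val % 4 = a) (fun y : Fin n => y.val % 4 = b),
    card_product]

lemma fiber_card_zero (n a b : ℕ) (hab : pat a b ≠ 0) :
    (((univ : Finset (Fin n × Fin n)).filter (fun v => Lfun n v = 0)).filter
      (fun v => (v.1.val % 4, v.2.val % 4) = (a, b))).card = 0 := by
  rw [filter_filter, card_eq_zero, filter_eq_empty_iff]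
  rintro v - ⟨h0, h⟩
  simp only [Prod.mk.injEq] at h
  have hv : Lfun n v = pat a b := by
    show pat (v.1.val % 4) (v.2.val % 4) = pat a b
    rw [h.1, h.2]
  rw [hv] at h0
  exact hab h0

lemma count (n : ℕ) (hn : 3 ≤ n) (h4 : 4 ∣ n) :
    ((univ : Finset (Fin n × Fin n)).filter (fun v => Lfun n v = 0)).card
      = 3 * n ^ 2 / 8 := by
  have maps : ∀ v ∈ (univ : Finset (Fin n × Fin n)).filter (fun v => Lfun n v = 0),
      (v.1.val % 4, v.2.val % 4) ∈ (Finset.range 4) ×ˢ (Finset.range 4) := by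
    intro v _
    simp only [Finset.mem_product, Finset.mem_range]
    omega
  rw [Finset.card_eq_sum_card_fiberwise maps, Finset.sum_product]
  simp only [Finset.sum_range_succ, Finset.sum_range_zero]
  rw [fiber_card n 0 0 rfl,
    fiber_card_zero n 0 1 (by decide),
    fiber_card_zero n 0 2 (by decide),
    fiber_card_zero n 0 3 (by decide),
    fiber_card_zero n 1 0 (by decide),
    fiber_card n 1 1 rfl,
    fiber_card_zero n 1 2 (by decide),
    fiber_card n 1 3 rfl,
    fiber_card_zero n 2 0 (by decide),
    fiber_card_zero n 2 1 (by decide),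
    fiber_card n 2 2 rfl,
    fiber_card_zero n 2 3 (by decide),
    fiber_card_zero n 3 0 (by decide),
    fiber_card n 3 1 rfl,
    fiber_card_zero n 3 2 (by decide),
    fiber_card n 3 3 rfl]
  rw [modcount n 4 0 (by norm_num) h4 (by norm_num),
    modcount n 4 1 (by norm_num) h4 (by norm_num),
    modcount n 4 2 (by norm_num) h4 (by norm_num),
    modcount n 4 3 (by norm_num) h4 (by norm_num)]
  obtain ⟨m, rfl⟩ := h4
  rw [Nat.mul_div_cancel_left m (by norm_num : 0 < 4)]
  have hsq : (4 * m) ^ 2 = 16 * (m * m) := by ring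
  rw [hsq]
  generalize m * m = t
  omega

end WDMTorus

/-- For `4 ∣ n`, the torus `C_n □ C_n` with constant threshold 3 has a weak
dynamic monopoly of size `3n²/8`; hence `wdyn(C_n □ C_n) ≤ 3n²/8`. -/
theorem wdyn_torus_upper_bound (n : ℕ) (hn : 3 ≤ n) (h4 : 4 ∣ n) :
    (∃ D : Finset (Fin n × Fin n),
      IsWDM ((SimpleGraph.cycleGraph n).boxProd (SimpleGraph.cycleGraph n))
        (fun _ => 3) D ∧ D.card = 3 * n ^ 2 / 8) ∧
    wdyn ((SimpleGraph.cycleGraph n).boxProd (SimpleGraph.cycleGraph n))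
      (fun _ => 3) ≤ 3 * n ^ 2 / 8 := by
  haveI : NeZero n := ⟨by omega⟩
  have hD : IsWDM ((SimpleGraph.cycleGraph n).boxProd (SimpleGraph.cycleGraph n))
      (fun _ => 3) ((univ : Finset (Fin n × Fin n)).filter (fun v => WDMTorus.Lfun n v = 0)) :=
    ⟨WDMTorus.Lfun n, WDMTorus.layers n hn h4, fun v => by simp⟩
  have hcard := WDMTorus.count n hn h4
  exact ⟨⟨_, hD, hcard⟩, Nat.sInf_le ⟨_, hD, hcard⟩⟩
end
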